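/- arXiv:math/0602416 — 3 statements merged into one kernel-verified Lean document; each statement's English description precedes it below -/
import Mathlib

section
/- Assume that the trace of E*_0 E_0 is nonzero and let ν denote its multiplicative inverse, so tr(E*_0 E_0) = ν^{−1}. Then for all 0≤i,j≤d, (ν / (φ_1 φ_2 ⋯ φ_j)) · τ_i(A) E*_0 E_0 τ*_j(A*) = Δ_{i,j}, where Δ_{i,j} denotes the (d+1)×(d+1) matrix unit over K whose (i,j)-entry is 1 and whose other entries are 0. (Since A is lower bidiagonal and A* is upper bidiagonal as specified, the standard basis of K^{d+1} is a Φ-split basis, and these Δ_{i,j} are the matrix units associated with the split basis.) -/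
open Polynomial Matrix Finset

noncomputable section

/-- The lower bidiagonal matrix with diagonal entries `θ 0, …, θ d` and
subdiagonal entries `1`. -/
def matA {K : Type*} [Field K] (d : ℕ) (θ : ℕ → K) :
    Matrix (Fin (d + 1)) (Fin (d + 1)) K :=
  Matrix.of fun i j =>
    if (i : ℕ) = (j : ℕ) then θ (i : ℕ)
    else if (i : ℕ) = (j : ℕ) + 1 then 1 else 0

/-- The upper bidiagonal matrix with diagonal entries `θs 0, …, θs d` and
superdiagonal entries `φ 1, …, φ d` (the `(i-1,i)`-entry is `φ i`). -/
def matAs {K : Type*} [Field K] (d : ℕ) (θs φ : ℕ → K) :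
    Matrix (Fin (d + 1)) (Fin (d + 1)) K :=
  Matrix.of fun i j =>
    if (i : ℕ) = (j : ℕ) then θs (i : ℕ)
    else if (j : ℕ) = (i : ℕ) + 1 then φ (j : ℕ) else 0

/-- The primitive idempotent `E_i = ∏_{j ≠ i} (M - θ_j I)/(θ_i - θ_j)` of a matrix `M`
with eigenvalues `θ 0, …, θ d`. -/
def primIdem {K : Type*} [Field K] (d : ℕ) (θ : ℕ → K)
    (M : Matrix (Fin (d + 1)) (Fin (d + 1)) K) (i : ℕ) :
    Matrix (Fin (d + 1)) (Fin (d + 1)) K :=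
  Polynomial.aeval M (∏ j ∈ (Finset.range (d + 1)).erase i,
    (Polynomial.C ((θ i - θ j)⁻¹) * (Polynomial.X - Polynomial.C (θ j))))

/-- `τ_i(λ) = (λ - θ_0)(λ - θ_1)⋯(λ - θ_{i-1})`. -/
def tauPoly {K : Type*} [Field K] (θ : ℕ → K) (i : ℕ) : Polynomial K :=
  ∏ k ∈ Finset.range i, (Polynomial.X - Polynomial.C (θ k))

/-- `η_i(λ) = (λ - θ_d)(λ - θ_{d-1})⋯(λ - θ_{d-i+1})`. -/
def etaPoly {K : Type*} [Field K] (d : ℕ) (θ : ℕ → K) (i : ℕ) : Polynomial K :=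
  ∏ k ∈ Finset.range i, (Polynomial.X - Polynomial.C (θ (d - k)))

section Aux

variable {K : Type*} [Field K] {d : ℕ} (θ θs φ : ℕ → K)

lemma pow_matA_row0 (n : ℕ) (j : Fin (d + 1)) :
    (matA d θ ^ n) 0 j = if (j : ℕ) = 0 then θ 0 ^ n else 0 := by
  induction n with
  | zero =>
    simp [Matrix.one_apply, Fin.ext_iff, -Fin.val_eq_zero_iff, eq_comm]
  | succ n ih =>
    rw [pow_succ', Matrix.mul_apply]
    have h : ∀ k : Fin (d + 1),
        matA d θ 0 k * (matA d θ ^ n) k j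
          = if k = 0 then θ 0 * ((matA d θ ^ n) 0 j) else 0 := by
      intro k
      by_cases hk : k = 0
      · subst hk; simp [matA]
      · have hk' : (0 : ℕ) ≠ (k : ℕ) := by
          simp [Fin.ext_iff, -Fin.val_eq_zero_iff] at hk
          omega
        simp [matA, hk', hk]
    rw [Finset.sum_congr rfl (fun k _ => h k), Finset.sum_ite_eq']
    simp [ih]
    split <;> ring

lemma pow_matAs_col0 (n : ℕ) (i : Fin (d + 1)) :
    (matAs d θs φ ^ n) i 0 = if (i : ℕ) = 0 then θs 0 ^ n else 0 := by
  induction n with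
  | zero =>
    simp [Matrix.one_apply, Fin.ext_iff, -Fin.val_eq_zero_iff]
  | succ n ih =>
    rw [pow_succ, Matrix.mul_apply]
    have h : ∀ k : Fin (d + 1),
        (matAs d θs φ ^ n) i k * matAs d θs φ k 0
          = if k = 0 then (matAs d θs φ ^ n) i 0 * θs 0 else 0 := by
      intro k
      by_cases hk : k = 0
      · subst hk; simp [matAs]
      · have hk' : (k : ℕ) ≠ 0 := by
          simp [Fin.ext_iff, -Fin.val_eq_zero_iff] at hk
          omega
        simp [matAs, hk', hk]
    rw [Finset.sum_congr rfl (fun k _ => h k), Finset.sum_ite_eq']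
    simp [ih]
    split <;> ring

lemma aeval_matA_row0 (p : K[X]) (j : Fin (d + 1)) :
    (Polynomial.aeval (matA d θ) p) 0 j = if (j : ℕ) = 0 then p.eval (θ 0) else 0 := by
  induction p using Polynomial.induction_on' with
  | add p q hp hq =>
    rw [map_add, Matrix.add_apply, hp, hq, Polynomial.eval_add]
    split <;> simp
  | monomial n a =>
    rw [Polynomial.aeval_monomial, ← Algebra.smul_def, Matrix.smul_apply,
      pow_matA_row0]
    simp [Polynomial.eval_monomial]

lemma aeval_matAs_col0 (p : K[X]) (i : Fin (d + 1)) :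
    (Polynomial.aeval (matAs d θs φ) p) i 0 = if (i : ℕ) = 0 then p.eval (θs 0) else 0 := by
  induction p using Polynomial.induction_on' with
  | add p q hp hq =>
    rw [map_add, Matrix.add_apply, hp, hq, Polynomial.eval_add]
    split <;> simp
  | monomial n a =>
    rw [Polynomial.aeval_monomial, ← Algebra.smul_def, Matrix.smul_apply,
      pow_matAs_col0]
    simp [Polynomial.eval_monomial]

lemma matA_charpoly : (matA d θ).charpoly = ∏ k ∈ Finset.range (d + 1), (X - C (θ k)) := by
  unfold Matrix.charpoly
  rw [Matrix.det_of_lowerTriangular _ ?ht]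
  case ht =>
    intro i j hij
    have hij' : (i : ℕ) < (j : ℕ) := hij
    rw [charmatrix_apply_ne _ _ _ (by intro h; subst h; omega)]
    have : matA d θ i j = 0 := by
      simp only [matA, Matrix.of_apply]
      rw [if_neg (by omega), if_neg (by omega)]
    rw [this, map_zero, neg_zero]
  rw [← Fin.prod_univ_eq_prod_range]
  refine Finset.prod_congr rfl fun i _ => ?_
  rw [charmatrix_apply_eq]
  congr 1
  simp [matA]

lemma matAs_charpoly : (matAs d θs φ).charpoly = ∏ k ∈ Finset.range (d + 1), (X - C (θs k)) := by
  unfold Matrix.charpoly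
  rw [Matrix.det_of_upperTriangular ?ht]
  case ht =>
    intro i j hij
    have hij' : (j : ℕ) < (i : ℕ) := hij
    rw [charmatrix_apply_ne _ _ _ (by intro h; subst h; omega)]
    have : matAs d θs φ i j = 0 := by
      simp only [matAs, Matrix.of_apply]
      rw [if_neg (by omega), if_neg (by omega)]
    rw [this, map_zero, neg_zero]
  rw [← Fin.prod_univ_eq_prod_range]
  refine Finset.prod_congr rfl fun i _ => ?_
  rw [charmatrix_apply_eq]
  congr 1
  simp [matAs]

lemma sub_mul_primIdem (M : Matrix (Fin (d + 1)) (Fin (d + 1)) K)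
    (hM : Polynomial.aeval M (∏ k ∈ Finset.range (d + 1), (X - C (θ k))) = 0) :
    (M - θ 0 • 1) * primIdem d θ M 0 = 0 ∧ primIdem d θ M 0 * (M - θ 0 • 1) = 0 := by
  have h1 : (M - θ 0 • 1) = Polynomial.aeval M (X - C (θ 0)) := by
    simp [Algebra.algebraMap_eq_smul_one]
  have h2 : (X - C (θ 0)) * ∏ j ∈ (Finset.range (d + 1)).erase 0,
        (C ((θ 0 - θ j)⁻¹) * (X - C (θ j)))
      = (∏ j ∈ (Finset.range (d + 1)).erase 0, C ((θ 0 - θ j)⁻¹))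
          * ∏ k ∈ Finset.range (d + 1), (X - C (θ k)) := by
    rw [Finset.prod_mul_distrib, ← Finset.mul_prod_erase (Finset.range (d + 1))
      (fun k => X - C (θ k)) (Finset.mem_range.mpr (Nat.succ_pos d))]
    ring
  constructor
  · rw [h1, primIdem, ← _root_.map_mul, h2, _root_.map_mul, hM, mul_zero]
  · rw [h1, primIdem, ← _root_.map_mul, mul_comm, h2, _root_.map_mul, hM, mul_zero]

lemma primIdem_matA_row0 (hθ : ∀ i ≤ d, ∀ j ≤ d, θ i = θ j → i = j) (j : Fin (d + 1)) :
    primIdem d θ (matA d θ) 0 0 j = if (j : ℕ) = 0 then 1 else 0 := by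
  rw [primIdem, aeval_matA_row0]
  have heval : Polynomial.eval (θ 0) (∏ j ∈ (Finset.range (d + 1)).erase 0,
      (C ((θ 0 - θ j)⁻¹) * (X - C (θ j)))) = 1 := by
    rw [Polynomial.eval_prod]
    apply Finset.prod_eq_one
    intro k hk
    simp only [Finset.mem_erase, Finset.mem_range] at hk
    have hne : θ 0 - θ k ≠ 0 := by
      refine sub_ne_zero.mpr fun h => hk.1 ?_
      exact (hθ 0 (Nat.zero_le d) k (by omega) h).symm
    simp only [Polynomial.eval_mul, Polynomial.eval_C, Polynomial.eval_sub, Polynomial.eval_X]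
    exact inv_mul_cancel₀ hne
  rw [heval]

lemma primIdem_matAs_col0 (hθs : ∀ i ≤ d, ∀ j ≤ d, θs i = θs j → i = j) (i : Fin (d + 1)) :
    primIdem d θs (matAs d θs φ) 0 i 0 = if (i : ℕ) = 0 then 1 else 0 := by
  rw [primIdem, aeval_matAs_col0]
  have heval : Polynomial.eval (θs 0) (∏ j ∈ (Finset.range (d + 1)).erase 0,
      (C ((θs 0 - θs j)⁻¹) * (X - C (θs j)))) = 1 := by
    rw [Polynomial.eval_prod]
    apply Finset.prod_eq_one
    intro k hk
    simp only [Finset.mem_erase, Finset.mem_range] at hk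
    have hne : θs 0 - θs k ≠ 0 := by
      refine sub_ne_zero.mpr fun h => hk.1 ?_
      exact (hθs 0 (Nat.zero_le d) k (by omega) h).symm
    simp only [Polynomial.eval_mul, Polynomial.eval_C, Polynomial.eval_sub, Polynomial.eval_X]
    exact inv_mul_cancel₀ hne
  rw [heval]

lemma primIdem_matA_col (hθ : ∀ i ≤ d, ∀ j ≤ d, θ i = θ j → i = j) :
    ∀ i j : Fin (d + 1), (j : ℕ) ≠ 0 → primIdem d θ (matA d θ) 0 i j = 0 := by
  have hch : Polynomial.aeval (matA d θ) (∏ k ∈ Finset.range (d + 1), (X - C (θ k))) = 0 := by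
    rw [← matA_charpoly θ]; exact Matrix.aeval_self_charpoly _
  have hkey := (sub_mul_primIdem θ (matA d θ) hch).1
  intro i
  induction i using Fin.induction with
  | zero =>
    intro j hj
    rw [primIdem_matA_row0 θ hθ, if_neg hj]
  | succ m ih =>
    intro j hj
    set E := primIdem d θ (matA d θ) 0 with hE
    have h0 : ((matA d θ - θ 0 • 1) * E) m.succ j = 0 := by rw [hkey]; rfl
    rw [Matrix.mul_apply] at h0
    have hterm : ∀ k : Fin (d + 1), (matA d θ - θ 0 • 1) m.succ k * E k j
        = (if k = m.succ then (θ ((m : ℕ) + 1) - θ 0) * E m.succ j else 0)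
          + (if k = m.castSucc then E m.castSucc j else 0) := by
      intro k
      have hsc : (m.succ : Fin (d + 1)) ≠ m.castSucc := by
        simp [Fin.ext_iff]
      by_cases h1 : k = m.succ
      · subst h1
        rw [if_pos rfl, if_neg hsc, add_zero]
        have e1 : (matA d θ - θ 0 • 1) m.succ m.succ = θ ((m : ℕ) + 1) - θ 0 := by
          simp [Matrix.sub_apply, Matrix.smul_apply, matA, Matrix.one_apply]
        rw [e1]
      · by_cases h2 : k = m.castSucc
        · subst h2
          rw [if_neg (by simpa [eq_comm] using hsc), if_pos rfl, zero_add]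
          have e2 : (matA d θ - θ 0 • 1) m.succ m.castSucc = 1 := by
            simp only [Matrix.sub_apply, Matrix.smul_apply, Matrix.one_apply, matA,
              Matrix.of_apply, Fin.val_succ, Fin.coe_castSucc]
            rw [if_neg (by omega)]
            simp [hsc]
          rw [e2, one_mul]
        · rw [if_neg h1, if_neg h2, add_zero]
          have e3 : (matA d θ - θ 0 • 1) m.succ k = 0 := by
            have hv1 : ((m.succ : Fin (d + 1)) : ℕ) ≠ (k : ℕ) := by
              simp [Fin.ext_iff] at h1 ⊢
              omega
            have hv2 : ((m.succ : Fin (d + 1)) : ℕ) ≠ (k : ℕ) + 1 := by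
              simp only [Fin.ext_iff, Fin.coe_castSucc] at h2
              simp only [Fin.val_succ]
              omega
            simp only [Matrix.sub_apply, Matrix.smul_apply, Matrix.one_apply, matA,
              Matrix.of_apply]
            rw [if_neg hv1, if_neg hv2, if_neg (fun h => hv1 (by rw [h]))]
            simp
          rw [e3, zero_mul]
    rw [Finset.sum_congr rfl (fun k _ => hterm k), Finset.sum_add_distrib,
      Finset.sum_ite_eq', Finset.sum_ite_eq'] at h0
    simp only [Finset.mem_univ, if_true] at h0
    rw [ih j hj, add_zero] at h0
    have hne : θ ((m : ℕ) + 1) - θ 0 ≠ 0 := by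
      refine sub_ne_zero.mpr fun h => ?_
      have := hθ ((m : ℕ) + 1) (by omega) 0 (Nat.zero_le d) h
      omega
    have := mul_eq_zero.mp h0
    tauto

lemma primIdem_matAs_row (hθs : ∀ i ≤ d, ∀ j ≤ d, θs i = θs j → i = j) :
    ∀ j i : Fin (d + 1), (i : ℕ) ≠ 0 → primIdem d θs (matAs d θs φ) 0 i j = 0 := by
  have hch : Polynomial.aeval (matAs d θs φ)
      (∏ k ∈ Finset.range (d + 1), (X - C (θs k))) = 0 := by
    rw [← matAs_charpoly θs φ]; exact Matrix.aeval_self_charpoly _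
  have hkey := (sub_mul_primIdem θs (matAs d θs φ) hch).2
  intro j
  induction j using Fin.induction with
  | zero =>
    intro i hi
    rw [primIdem_matAs_col0 θs φ hθs, if_neg hi]
  | succ m ih =>
    intro i hi
    set E := primIdem d θs (matAs d θs φ) 0 with hE
    have h0 : (E * (matAs d θs φ - θs 0 • 1)) i m.succ = 0 := by rw [hkey]; rfl
    rw [Matrix.mul_apply] at h0
    have hterm : ∀ k : Fin (d + 1), E i k * (matAs d θs φ - θs 0 • 1) k m.succ
        = (if k = m.succ then E i m.succ * (θs ((m : ℕ) + 1) - θs 0) else 0)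
          + (if k = m.castSucc then E i m.castSucc * φ ((m : ℕ) + 1) else 0) := by
      intro k
      have hsc : (m.succ : Fin (d + 1)) ≠ m.castSucc := by
        simp [Fin.ext_iff]
      by_cases h1 : k = m.succ
      · subst h1
        rw [if_pos rfl, if_neg hsc, add_zero]
        have e1 : (matAs d θs φ - θs 0 • 1) m.succ m.succ = θs ((m : ℕ) + 1) - θs 0 := by
          simp [Matrix.sub_apply, Matrix.smul_apply, matAs, Matrix.one_apply]
        rw [e1]
      · by_cases h2 : k = m.castSucc
        · subst h2
          rw [if_neg (by simpa [eq_comm] using hsc), if_pos rfl, zero_add]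
          have e2 : (matAs d θs φ - θs 0 • 1) m.castSucc m.succ = φ ((m : ℕ) + 1) := by
            simp only [Matrix.sub_apply, Matrix.smul_apply, Matrix.one_apply, matAs,
              Matrix.of_apply, Fin.val_succ, Fin.coe_castSucc]
            rw [if_neg (by omega)]
            simp [Ne.symm hsc]
          rw [e2]
        · rw [if_neg h1, if_neg h2, add_zero]
          have e3 : (matAs d θs φ - θs 0 • 1) k m.succ = 0 := by
            have hv1 : (k : ℕ) ≠ ((m.succ : Fin (d + 1)) : ℕ) := by
              simp [Fin.ext_iff] at h1 ⊢
              omega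
            have hv2 : ((m.succ : Fin (d + 1)) : ℕ) ≠ (k : ℕ) + 1 := by
              simp only [Fin.ext_iff, Fin.coe_castSucc] at h2
              simp only [Fin.val_succ]
              omega
            simp only [Matrix.sub_apply, Matrix.smul_apply, Matrix.one_apply, matAs,
              Matrix.of_apply]
            rw [if_neg hv1, if_neg hv2, if_neg (fun h => hv1 (by rw [h]))]
            simp
          rw [e3, mul_zero]
    rw [Finset.sum_congr rfl (fun k _ => hterm k), Finset.sum_add_distrib,
      Finset.sum_ite_eq', Finset.sum_ite_eq'] at h0
    simp only [Finset.mem_univ, if_true] at h0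
    rw [ih i hi, zero_mul, add_zero] at h0
    have hne : θs ((m : ℕ) + 1) - θs 0 ≠ 0 := by
      refine sub_ne_zero.mpr fun h => ?_
      have := hθs ((m : ℕ) + 1) (by omega) 0 (Nat.zero_le d) h
      omega
    have := mul_eq_zero.mp h0
    tauto

lemma tau_col : ∀ n, n ≤ d → ∀ a : Fin (d + 1),
    (Polynomial.aeval (matA d θ) (tauPoly θ n)) a 0 = if (a : ℕ) = n then 1 else 0 := by
  intro n
  induction n with
  | zero =>
    intro _ a
    simp [tauPoly, Matrix.one_apply, Fin.ext_iff, -Fin.val_eq_zero_iff]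
  | succ n ih =>
    intro hn a
    have hn' : n ≤ d := by omega
    have hsplit : tauPoly θ (n + 1) = (X - C (θ n)) * tauPoly θ n := by
      rw [tauPoly, tauPoly, Finset.prod_range_succ, mul_comm]
    rw [hsplit, _root_.map_mul, Matrix.mul_apply]
    have hXC : Polynomial.aeval (matA d θ) (X - C (θ n)) = matA d θ - θ n • 1 := by
      simp [Algebra.algebraMap_eq_smul_one]
    set kn : Fin (d + 1) := ⟨n, by omega⟩ with hkn
    have hterm : ∀ k : Fin (d + 1),
        (Polynomial.aeval (matA d θ) (X - C (θ n))) a k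
            * (Polynomial.aeval (matA d θ) (tauPoly θ n)) k 0
          = if k = kn then (matA d θ - θ n • 1) a kn else 0 := by
      intro k
      rw [ih hn', hXC]
      by_cases hk : k = kn
      · subst hk; simp [hkn]
      · rw [if_neg (by simpa [Fin.ext_iff, hkn] using hk), if_neg hk, mul_zero]
    rw [Finset.sum_congr rfl (fun k _ => hterm k), Finset.sum_ite_eq']
    simp only [Finset.mem_univ, if_true]
    have hkv : (kn : ℕ) = n := rfl
    by_cases h1 : (a : ℕ) = n
    · have ha : a = kn := by simp [Fin.ext_iff, hkv, h1]
      rw [ha, if_neg (by omega)]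
      simp [Matrix.sub_apply, Matrix.smul_apply, matA, Matrix.one_apply, hkv]
    · by_cases h2 : (a : ℕ) = n + 1
      · rw [if_pos h2]
        simp only [Matrix.sub_apply, Matrix.smul_apply, Matrix.one_apply, matA,
          Matrix.of_apply, hkv]
        rw [if_neg (by omega), if_pos (by omega), if_neg (by simp [Fin.ext_iff, hkv]; omega)]
        simp
      · rw [if_neg h2]
        simp only [Matrix.sub_apply, Matrix.smul_apply, Matrix.one_apply, matA,
          Matrix.of_apply, hkv]
        rw [if_neg (by omega), if_neg (by omega), if_neg (by simp [Fin.ext_iff, hkv]; omega)]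
        simp
lemma taus_row : ∀ n, n ≤ d → ∀ b : Fin (d + 1),
    (Polynomial.aeval (matAs d θs φ) (tauPoly θs n)) 0 b
      = if (b : ℕ) = n then ∏ k ∈ Finset.Icc 1 n, φ k else 0 := by
  intro n
  induction n with
  | zero =>
    intro _ b
    have : Finset.Icc 1 0 = (∅ : Finset ℕ) := by simp
    simp [tauPoly, Matrix.one_apply, Fin.ext_iff, -Fin.val_eq_zero_iff, eq_comm, this]
  | succ n ih =>
    intro hn b
    have hn' : n ≤ d := by omega
    have hsplit : tauPoly θs (n + 1) = tauPoly θs n * (X - C (θs n)) := by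
      rw [tauPoly, tauPoly, Finset.prod_range_succ]
    rw [hsplit, _root_.map_mul, Matrix.mul_apply]
    have hXC : Polynomial.aeval (matAs d θs φ) (X - C (θs n)) = matAs d θs φ - θs n • 1 := by
      simp [Algebra.algebraMap_eq_smul_one]
    set kn : Fin (d + 1) := ⟨n, by omega⟩ with hkn
    have hkv : (kn : ℕ) = n := rfl
    have hterm : ∀ k : Fin (d + 1),
        (Polynomial.aeval (matAs d θs φ) (tauPoly θs n)) 0 k
            * (Polynomial.aeval (matAs d θs φ) (X - C (θs n))) k b
          = if k = kn then (∏ k ∈ Finset.Icc 1 n, φ k) * (matAs d θs φ - θs n • 1) kn b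
            else 0 := by
      intro k
      rw [ih hn', hXC]
      by_cases hk : k = kn
      · subst hk
        rw [if_pos hkv, if_pos rfl]
      · rw [if_neg (by simpa [Fin.ext_iff, hkv] using hk), if_neg hk, zero_mul]
    rw [Finset.sum_congr rfl (fun k _ => hterm k), Finset.sum_ite_eq']
    simp only [Finset.mem_univ, if_true]
    by_cases h1 : (b : ℕ) = n
    · rw [if_neg (by omega)]
      have hb : b = kn := by simp [Fin.ext_iff, hkv, h1]
      rw [hb]
      have e : (matAs d θs φ - θs n • 1) kn kn = 0 := by
        simp [Matrix.sub_apply, Matrix.smul_apply, matAs, Matrix.one_apply, hkv]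
      rw [e, mul_zero]
    · by_cases h2 : (b : ℕ) = n + 1
      · rw [if_pos h2]
        have e : (matAs d θs φ - θs n • 1) kn b = φ (n + 1) := by
          simp only [Matrix.sub_apply, Matrix.smul_apply, Matrix.one_apply, matAs,
            Matrix.of_apply, hkv]
          rw [if_neg (by omega), if_pos (by omega), if_neg (by simp [Fin.ext_iff, hkv]; omega),
            h2]
          simp
        rw [e, Finset.prod_Icc_succ_top (by omega)]
      · rw [if_neg h2]
        have e : (matAs d θs φ - θs n • 1) kn b = 0 := by
          simp only [Matrix.sub_apply, Matrix.smul_apply, Matrix.one_apply, matAs,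
            Matrix.of_apply, hkv]
          rw [if_neg (by omega), if_neg (by omega), if_neg (by simp [Fin.ext_iff, hkv]; omega)]
          simp
        rw [e, mul_zero]

end Aux

theorem matrix_units_split_basis {K : Type*} [Field K] (d : ℕ) (θ θs φ : ℕ → K)
    (hθ : ∀ i ≤ d, ∀ j ≤ d, θ i = θ j → i = j)
    (hθs : ∀ i ≤ d, ∀ j ≤ d, θs i = θs j → i = j)
    (hφ : ∀ i, 1 ≤ i → i ≤ d → φ i ≠ 0)
    (hE0 : ∀ i ≤ d, ∀ j ≤ d, 1 < |(i : ℤ) - (j : ℤ)| →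
      primIdem d θ (matA d θ) i * matAs d θs φ * primIdem d θ (matA d θ) j = 0)
    (hE1 : ∀ i ≤ d, ∀ j ≤ d, |(i : ℤ) - (j : ℤ)| = 1 →
      primIdem d θ (matA d θ) i * matAs d θs φ * primIdem d θ (matA d θ) j ≠ 0)
    (hEs0 : ∀ i ≤ d, ∀ j ≤ d, 1 < |(i : ℤ) - (j : ℤ)| →
      primIdem d θs (matAs d θs φ) i * matA d θ * primIdem d θs (matAs d θs φ) j = 0)
    (hEs1 : ∀ i ≤ d, ∀ j ≤ d, |(i : ℤ) - (j : ℤ)| = 1 →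
      primIdem d θs (matAs d θs φ) i * matA d θ * primIdem d θs (matAs d θs φ) j ≠ 0)
    (htr : Matrix.trace (primIdem d θs (matAs d θs φ) 0 * primIdem d θ (matA d θ) 0) ≠ 0) :
    ∀ i j : Fin (d + 1),
      ((Matrix.trace (primIdem d θs (matAs d θs φ) 0 * primIdem d θ (matA d θ) 0))⁻¹ / ∏ k ∈ Finset.Icc 1 (j : ℕ), φ k) •
        (Polynomial.aeval (matA d θ) (tauPoly θ ((i : ℕ))) * primIdem d θs (matAs d θs φ) 0 * primIdem d θ (matA d θ) 0 * Polynomial.aeval (matAs d θs φ) (tauPoly θs ((j : ℕ))))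
      = Matrix.single i j 1 := by
  intro i j
  set Es := primIdem d θs (matAs d θs φ) 0 with hEsdef
  set E := primIdem d θ (matA d θ) 0 with hEdef
  set c := Matrix.trace (Es * E) with hc
  have hEsrow := primIdem_matAs_row θs φ hθs
  have hEcol := primIdem_matA_col θ hθ
  have hzero : ∀ a b : Fin (d + 1), ¬((a : ℕ) = 0 ∧ (b : ℕ) = 0) → (Es * E) a b = 0 := by
    intro a b hab
    rw [Matrix.mul_apply]
    apply Finset.sum_eq_zero
    intro k _
    by_cases ha : (a : ℕ) = 0
    · have hb : (b : ℕ) ≠ 0 := fun h => hab ⟨ha, h⟩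
      rw [← hEdef] at hEcol
      rw [hEcol k b hb, mul_zero]
    · rw [← hEsdef] at hEsrow
      rw [hEsrow k a ha, zero_mul]
  have htr0 : c = (Es * E) 0 0 := by
    rw [hc, Matrix.trace]
    have h : ∀ k : Fin (d + 1), Matrix.diag (Es * E) k
        = if k = 0 then (Es * E) 0 0 else 0 := by
      intro k
      by_cases hk : k = 0
      · subst hk; simp [Matrix.diag]
      · rw [Matrix.diag, if_neg hk]
        exact hzero k k (by simp [Fin.ext_iff, -Fin.val_eq_zero_iff] at hk ⊢; omega)
    rw [Finset.sum_congr rfl (fun k _ => h k), Finset.sum_ite_eq']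
    simp
  have hEsE : ∀ a b : Fin (d + 1),
      (Es * E) a b = if (a : ℕ) = 0 ∧ (b : ℕ) = 0 then c else 0 := by
    intro a b
    by_cases hab : (a : ℕ) = 0 ∧ (b : ℕ) = 0
    · rw [if_pos hab, htr0]
      have ha : a = 0 := by apply Fin.ext; simpa using hab.1
      have hb : b = 0 := by apply Fin.ext; simpa using hab.2
      rw [ha, hb]
    · rw [if_neg hab, hzero a b hab]
  have hassoc : Polynomial.aeval (matA d θ) (tauPoly θ ((i : ℕ))) * Es * E
        * Polynomial.aeval (matAs d θs φ) (tauPoly θs ((j : ℕ)))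
      = Polynomial.aeval (matA d θ) (tauPoly θ ((i : ℕ))) * (Es * E)
        * Polynomial.aeval (matAs d θs φ) (tauPoly θs ((j : ℕ))) := by
    rw [Matrix.mul_assoc (Polynomial.aeval (matA d θ) (tauPoly θ ((i : ℕ)))) Es E]
  rw [hassoc]
  have hid : (i : ℕ) ≤ d := Nat.lt_succ_iff.mp i.isLt
  have hjd : (j : ℕ) ≤ d := Nat.lt_succ_iff.mp j.isLt
  have hM1 : ∀ a l : Fin (d + 1),
      (Polynomial.aeval (matA d θ) (tauPoly θ ((i : ℕ))) * (Es * E)) a l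
        = if (l : ℕ) = 0 then (if (a : ℕ) = (i : ℕ) then c else 0) else 0 := by
    intro a l
    rw [Matrix.mul_apply]
    have hterm : ∀ k : Fin (d + 1),
        (Polynomial.aeval (matA d θ) (tauPoly θ ((i : ℕ)))) a k * (Es * E) k l
          = if k = 0 then (Polynomial.aeval (matA d θ) (tauPoly θ ((i : ℕ)))) a 0
              * (if (l : ℕ) = 0 then c else 0) else 0 := by
      intro k
      rw [hEsE k l]
      by_cases hk : k = 0
      · subst hk
        simp
      · have hnk : ¬((k : ℕ) = 0 ∧ (l : ℕ) = 0) := by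
          simp [Fin.ext_iff, -Fin.val_eq_zero_iff] at hk
          omega
        rw [if_neg hnk, mul_zero, if_neg hk]
    rw [Finset.sum_congr rfl (fun k _ => hterm k), Finset.sum_ite_eq']
    simp only [Finset.mem_univ, if_true]
    rw [tau_col θ ((i : ℕ)) hid a]
    by_cases hl : (l : ℕ) = 0 <;> by_cases ha2 : (a : ℕ) = (i : ℕ) <;>
      simp [hl, ha2]
  ext a b
  rw [Matrix.smul_apply, Matrix.mul_apply]
  have hterm2 : ∀ l : Fin (d + 1),
      (Polynomial.aeval (matA d θ) (tauPoly θ ((i : ℕ))) * (Es * E)) a l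
          * (Polynomial.aeval (matAs d θs φ) (tauPoly θs ((j : ℕ)))) l b
        = if l = 0 then (if (a : ℕ) = (i : ℕ) then c else 0)
            * (Polynomial.aeval (matAs d θs φ) (tauPoly θs ((j : ℕ)))) 0 b else 0 := by
    intro l
    rw [hM1 a l]
    by_cases hl : l = 0
    · subst hl
      simp
    · rw [if_neg (by simp [Fin.ext_iff, -Fin.val_eq_zero_iff] at hl ⊢; omega), zero_mul, if_neg hl]
  rw [Finset.sum_congr rfl (fun l _ => hterm2 l), Finset.sum_ite_eq']
  simp only [Finset.mem_univ, if_true]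
  rw [taus_row θs φ ((j : ℕ)) hjd b]
  have hPne : (∏ k ∈ Finset.Icc 1 (j : ℕ), φ k) ≠ 0 := by
    rw [Finset.prod_ne_zero_iff]
    intro k hk
    rw [Finset.mem_Icc] at hk
    exact hφ k hk.1 (le_trans hk.2 hjd)
  have hstd : Matrix.single i j (1 : K) a b
      = if i = a ∧ j = b then 1 else 0 := rfl
  rw [hstd]
  by_cases ha : (a : ℕ) = (i : ℕ)
  · by_cases hb : (b : ℕ) = (j : ℕ)
    · rw [if_pos ha, if_pos hb, if_pos ⟨Fin.ext ha.symm, Fin.ext hb.symm⟩]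
      rw [smul_eq_mul]
      field_simp
    · rw [if_pos ha, if_neg hb, mul_zero, smul_zero,
        if_neg (fun h => hb (by rw [h.2.symm]))]
  · rw [if_neg ha, zero_mul, smul_zero, if_neg (fun h => ha (by rw [h.1.symm]))]
end
end

section
/- Set ν = η_d(θ_0) η*_d(θ*_0) / (ϕ_1 ϕ_2 ⋯ ϕ_d) and ν' = τ_d(θ_d) τ*_d(θ*_d) / (ϕ_1 ϕ_2 ⋯ ϕ_d) (these denominators and the scalars η_d(θ_0), η*_d(θ*_0), τ_d(θ_d), τ*_d(θ*_d) are nonzero). Then for all 0≤i,j≤d, (ν / (φ_1 φ_2 ⋯ φ_j)) · τ_i(A) E*_0 E_0 τ*_j(A*) = (ν' / (φ_d φ_{d−1} ⋯ φ_{i+1})) · η*_{d−i}(A*) E_d E*_d η_{d−j}(A). -/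
open Polynomial Matrix Finset

noncomputable section

section EE
variable {K : Type*} [Field K]

/-- standard basis vector, out-of-range gives 0 -/
def ee (K : Type*) [Field K] (d : ℕ) (s : ℕ) : Fin (d + 1) → K :=
  if h : s ≤ d then Pi.single (⟨s, Nat.lt_succ_of_le h⟩ : Fin (d + 1)) 1 else 0

lemma ee_apply (d s : ℕ) (k : Fin (d + 1)) :
    ee K d s k = if (k : ℕ) = s then 1 else 0 := by
  by_cases h : s ≤ d
  · simp [ee, dif_pos h, Pi.single_apply, Fin.ext_iff]
  · have : (k : ℕ) ≠ s := by omega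
    simp [ee, dif_neg h, this]

lemma ee_ne_zero (d s : ℕ) (h : s ≤ d) : ee K d s ≠ 0 := by
  intro h0
  have := congrFun h0 ⟨s, Nat.lt_succ_of_le h⟩
  rw [ee_apply] at this
  simp at this

lemma colA (d : ℕ) (θ : ℕ → K) (s : ℕ) (h : s ≤ d) :
    matA d θ *ᵥ ee K d s = θ s • ee K d s + ee K d (s + 1) := by
  funext k
  have hs : ee K d s = Pi.single (⟨s, Nat.lt_succ_of_le h⟩ : Fin (d + 1)) 1 := dif_pos h
  rw [hs, Matrix.mulVec_single]
  simp only [Pi.add_apply, Pi.smul_apply, smul_eq_mul, mul_one]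
  rw [← hs, ee_apply, ee_apply]
  rcases eq_or_ne (k : ℕ) s with hk | hk
  · have h2 : (k : ℕ) ≠ s + 1 := by omega
    simp [matA, hk, h2]
  · rcases eq_or_ne (k : ℕ) (s + 1) with hk2 | hk2
    · simp [matA, hk, hk2]
    · simp [matA, hk, hk2]

lemma rowA0 (d : ℕ) (θ : ℕ → K) :
    ee K d 0 ᵥ* matA d θ = θ 0 • ee K d 0 := by
  funext k
  have hs : ee K d 0 = Pi.single (⟨0, Nat.lt_succ_of_le d.zero_le⟩ : Fin (d + 1)) 1 :=
    dif_pos d.zero_le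
  rw [hs, Matrix.single_vecMul]
  simp only [Pi.smul_apply, smul_eq_mul, one_mul]
  rw [← hs, ee_apply]
  rcases eq_or_ne (k : ℕ) 0 with hk | hk
  · simp [matA, hk]
  · have h1 : (0 : ℕ) ≠ (k : ℕ) := by omega
    have h2 : (0 : ℕ) ≠ (k : ℕ) + 1 := by omega
    simp [matA, h1, h2, hk]

lemma rowA (d : ℕ) (θ : ℕ → K) (s : ℕ) (h1 : 1 ≤ s) (h2 : s ≤ d) :
    ee K d s ᵥ* matA d θ = θ s • ee K d s + ee K d (s - 1) := by
  funext k
  have hs : ee K d s = Pi.single (⟨s, Nat.lt_succ_of_le h2⟩ : Fin (d + 1)) 1 := dif_pos h2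
  rw [hs, Matrix.single_vecMul]
  simp only [Pi.add_apply, Pi.smul_apply, smul_eq_mul, one_mul]
  rw [← hs, ee_apply, ee_apply]
  rcases eq_or_ne (k : ℕ) s with hk | hk
  · simp [matA, hk, (show s ≠ s - 1 by omega)]
  · rcases eq_or_ne (k : ℕ) (s - 1) with hk2 | hk2
    · have ha : ¬ s = (k : ℕ) := by omega
      have hb : s = (k : ℕ) + 1 := by omega
      simp only [matA, Matrix.row_apply, Matrix.of_apply]
      rw [if_neg ha, if_pos hb, if_neg hk, if_pos hk2]
      ring
    · have ha : s ≠ (k : ℕ) := by omega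
      have hb : s ≠ (k : ℕ) + 1 := by omega
      simp [matA, ha, hb, hk, hk2]

lemma colAs0 (d : ℕ) (θs φ : ℕ → K) :
    matAs d θs φ *ᵥ ee K d 0 = θs 0 • ee K d 0 := by
  funext k
  have hs : ee K d 0 = Pi.single (⟨0, Nat.lt_succ_of_le d.zero_le⟩ : Fin (d + 1)) 1 :=
    dif_pos d.zero_le
  rw [hs, Matrix.mulVec_single]
  simp only [Pi.smul_apply, smul_eq_mul, mul_one]
  rw [← hs, ee_apply]
  rcases eq_or_ne (k : ℕ) 0 with hk | hk
  · simp [matAs, hk]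
  · have h2 : (0 : ℕ) ≠ (k : ℕ) + 1 := by omega
    simp [matAs, hk, h2]

lemma colAs (d : ℕ) (θs φ : ℕ → K) (s : ℕ) (h1 : 1 ≤ s) (h2 : s ≤ d) :
    matAs d θs φ *ᵥ ee K d s = θs s • ee K d s + φ s • ee K d (s - 1) := by
  funext k
  have hs : ee K d s = Pi.single (⟨s, Nat.lt_succ_of_le h2⟩ : Fin (d + 1)) 1 := dif_pos h2
  rw [hs, Matrix.mulVec_single]
  simp only [Pi.add_apply, Pi.smul_apply, smul_eq_mul, mul_one]
  rw [← hs, ee_apply, ee_apply]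
  rcases eq_or_ne (k : ℕ) s with hk | hk
  · simp [matAs, hk, (show s ≠ s - 1 by omega)]
  · rcases eq_or_ne (k : ℕ) (s - 1) with hk2 | hk2
    · have hb : s = (k : ℕ) + 1 := by omega
      simp only [matAs, Pi.smul_apply, MulOpposite.op_one, one_smul, Matrix.col_apply,
        Matrix.of_apply]
      rw [if_neg hk, if_pos hb, if_neg hk, if_pos hk2]
      ring
    · have hb : s ≠ (k : ℕ) + 1 := by omega
      simp [matAs, hk, hk2, hb]

lemma rowAs (d : ℕ) (θs φ : ℕ → K) (s : ℕ) (h : s ≤ d) :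
    ee K d s ᵥ* matAs d θs φ = θs s • ee K d s + φ (s + 1) • ee K d (s + 1) := by
  funext k
  have hs : ee K d s = Pi.single (⟨s, Nat.lt_succ_of_le h⟩ : Fin (d + 1)) 1 := dif_pos h
  rw [hs, Matrix.single_vecMul]
  simp only [Pi.add_apply, Pi.smul_apply, smul_eq_mul, one_mul]
  rw [← hs, ee_apply, ee_apply]
  rcases eq_or_ne (k : ℕ) s with hk | hk
  · simp [matAs, hk, (show s ≠ s + 1 by omega)]
  · rcases eq_or_ne (k : ℕ) (s + 1) with hk2 | hk2
    · simp [matAs, hk, hk2, (show s ≠ s + 1 by omega)]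
    · have ha : s ≠ (k : ℕ) := by omega
      have hb : (k : ℕ) ≠ s + 1 := hk2
      simp [matAs, ha, hk, hk2]

end EE

section Poly
variable {K : Type*} [Field K]

lemma vecMul_smul_mat {n : Type*} [Fintype n] (x : n → K) (a : K)
    (N : Matrix n n K) : x ᵥ* (a • N) = a • (x ᵥ* N) := by
  ext j
  simp [Matrix.vecMul, dotProduct, Finset.mul_sum, mul_left_comm]

lemma mulVec_aeval_eig {n : Type*} [Fintype n] [DecidableEq n]
    (M : Matrix n n K) (x : n → K) (μ : K) (h : M *ᵥ x = μ • x) (p : Polynomial K) :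
    (Polynomial.aeval M p) *ᵥ x = p.eval μ • x := by
  have hpow : ∀ m : ℕ, (M ^ m) *ᵥ x = μ ^ m • x := by
    intro m
    induction m with
    | zero => simp
    | succ m ih =>
      rw [pow_succ, ← Matrix.mulVec_mulVec, h, Matrix.mulVec_smul, ih, smul_smul, pow_succ,
        mul_comm]
  induction p using Polynomial.induction_on' with
  | add p q hp hq => simp [Matrix.add_mulVec, hp, hq, add_smul]
  | monomial m a =>
    rw [Polynomial.aeval_monomial, Algebra.algebraMap_eq_smul_one, smul_mul_assoc, one_mul,
      Matrix.smul_mulVec, hpow, Polynomial.eval_monomial, smul_smul]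

lemma vecMul_aeval_eig {n : Type*} [Fintype n] [DecidableEq n]
    (M : Matrix n n K) (x : n → K) (μ : K) (h : x ᵥ* M = μ • x) (p : Polynomial K) :
    x ᵥ* (Polynomial.aeval M p) = p.eval μ • x := by
  have hpow : ∀ m : ℕ, x ᵥ* (M ^ m) = μ ^ m • x := by
    intro m
    induction m with
    | zero => simp
    | succ m ih =>
      rw [pow_succ, ← Matrix.vecMul_vecMul, ih, Matrix.smul_vecMul, h, smul_smul, pow_succ,
        mul_comm]
  induction p using Polynomial.induction_on' with
  | add p q hp hq => simp [Matrix.vecMul_add, hp, hq, add_smul]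
  | monomial m a =>
    rw [Polynomial.aeval_monomial, Algebra.algebraMap_eq_smul_one, smul_mul_assoc, one_mul,
      vecMul_smul_mat, hpow, Polynomial.eval_monomial, smul_smul]

lemma aeval_X_sub_C {n : Type*} [Fintype n] [DecidableEq n]
    (M : Matrix n n K) (a : K) :
    Polynomial.aeval M (Polynomial.X - Polynomial.C a) = M - a • 1 := by
  rw [map_sub, Polynomial.aeval_X, Polynomial.aeval_C, Algebra.algebraMap_eq_smul_one]

lemma rows_zero {K : Type*} [Field K] {d : ℕ} {M : Matrix (Fin (d+1)) (Fin (d+1)) K}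
    (h : ∀ s : Fin (d+1), ee K d (s : ℕ) ᵥ* M = 0) : M = 0 := by
  ext k l
  have hk := congrFun (h k) l
  have hs : ee K d (k : ℕ) = Pi.single k 1 := by
    rw [ee, dif_pos (Nat.lt_succ_iff.mp k.isLt)]
  rw [hs, Matrix.single_vecMul] at hk
  simpa using hk

lemma cols_zero {K : Type*} [Field K] {d : ℕ} {M : Matrix (Fin (d+1)) (Fin (d+1)) K}
    (h : ∀ s : Fin (d+1), M *ᵥ ee K d (s : ℕ) = 0) : M = 0 := by
  ext k l
  have hk := congrFun (h l) k
  have hs : ee K d (l : ℕ) = Pi.single l 1 := by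
    rw [ee, dif_pos (Nat.lt_succ_iff.mp l.isLt)]
  rw [hs, Matrix.mulVec_single] at hk
  simpa using hk

lemma charZeroA (d : ℕ) (θ : ℕ → K) :
    Polynomial.aeval (matA d θ)
      (∏ j ∈ Finset.range (d+1), (Polynomial.X - Polynomial.C (θ j))) = 0 := by
  have key : ∀ s : ℕ, s ≤ d →
      ee K d s ᵥ* (Polynomial.aeval (matA d θ)
        (∏ j ∈ Finset.range (s+1), (Polynomial.X - Polynomial.C (θ j)))) = 0 := by
    intro s
    induction s with
    | zero =>
      intro _
      rw [Finset.prod_range_one, aeval_X_sub_C, Matrix.vecMul_sub, rowA0, vecMul_smul_mat,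
        Matrix.vecMul_one, sub_self]
    | succ s ih =>
      intro hs
      rw [Finset.prod_range_succ_comm, _root_.map_mul, ← Matrix.vecMul_vecMul, aeval_X_sub_C,
        Matrix.vecMul_sub, rowA d θ (s+1) (Nat.le_add_left 1 s) hs, vecMul_smul_mat,
        Matrix.vecMul_one]
      simp only [Nat.add_sub_cancel]
      rw [add_sub_cancel_left, ih (le_of_lt hs)]
  apply rows_zero
  intro s
  have hsd : (s : ℕ) ≤ d := Nat.lt_succ_iff.mp s.isLt
  have hsplit : (∏ j ∈ Finset.range (d+1), (Polynomial.X - Polynomial.C (θ j)))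
      = (∏ j ∈ Finset.range ((s:ℕ)+1), (Polynomial.X - Polynomial.C (θ j))) *
        (∏ j ∈ Finset.Ico ((s:ℕ)+1) (d+1), (Polynomial.X - Polynomial.C (θ j))) := by
    simp only [Finset.range_eq_Ico]
    exact (Finset.prod_Ico_consecutive _ (Nat.zero_le _) (by omega)).symm
  rw [hsplit, _root_.map_mul, ← Matrix.vecMul_vecMul, key (s : ℕ) hsd, Matrix.zero_vecMul]

lemma charZeroAs (d : ℕ) (θs φ : ℕ → K) :
    Polynomial.aeval (matAs d θs φ)
      (∏ j ∈ Finset.range (d+1), (Polynomial.X - Polynomial.C (θs j))) = 0 := by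
  have key : ∀ s : ℕ, s ≤ d →
      (Polynomial.aeval (matAs d θs φ)
        (∏ j ∈ Finset.range (s+1), (Polynomial.X - Polynomial.C (θs j)))) *ᵥ ee K d s = 0 := by
    intro s
    induction s with
    | zero =>
      intro _
      rw [Finset.prod_range_one, aeval_X_sub_C, Matrix.sub_mulVec, colAs0,
        Matrix.smul_mulVec, Matrix.one_mulVec, sub_self]
    | succ s ih =>
      intro hs
      rw [Finset.prod_range_succ, _root_.map_mul, ← Matrix.mulVec_mulVec, aeval_X_sub_C,
        Matrix.sub_mulVec, colAs d θs φ (s+1) (Nat.le_add_left 1 s) hs,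
        Matrix.smul_mulVec, Matrix.one_mulVec]
      simp only [Nat.add_sub_cancel]
      rw [add_sub_cancel_left, Matrix.mulVec_smul, ih (le_of_lt hs), smul_zero]
  apply cols_zero
  intro s
  have hsd : (s : ℕ) ≤ d := Nat.lt_succ_iff.mp s.isLt
  have hsplit : (∏ j ∈ Finset.range (d+1), (Polynomial.X - Polynomial.C (θs j)))
      = (∏ j ∈ Finset.Ico ((s:ℕ)+1) (d+1), (Polynomial.X - Polynomial.C (θs j))) *
        (∏ j ∈ Finset.range ((s:ℕ)+1), (Polynomial.X - Polynomial.C (θs j))) := by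
    simp only [Finset.range_eq_Ico]
    rw [mul_comm]
    exact (Finset.prod_Ico_consecutive _ (Nat.zero_le _) (by omega)).symm
  rw [hsplit, _root_.map_mul, ← Matrix.mulVec_mulVec, key (s : ℕ) hsd, Matrix.mulVec_zero]

end Poly

section Lag
variable {K : Type*} [Field K]

def lagPoly (d : ℕ) (θ : ℕ → K) (i : ℕ) : Polynomial K :=
  ∏ j ∈ (Finset.range (d + 1)).erase i,
    (Polynomial.C ((θ i - θ j)⁻¹) * (Polynomial.X - Polynomial.C (θ j)))

lemma primIdem_eq (d : ℕ) (θ : ℕ → K) (M : Matrix (Fin (d+1)) (Fin (d+1)) K) (i : ℕ) :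
    primIdem d θ M i = Polynomial.aeval M (lagPoly d θ i) := rfl

lemma lag_eval_self (d : ℕ) (θ : ℕ → K) (i : ℕ) (hi : i ≤ d)
    (hθ : ∀ a ≤ d, ∀ b ≤ d, θ a = θ b → a = b) :
    (lagPoly d θ i).eval (θ i) = 1 := by
  rw [lagPoly, Polynomial.eval_prod]
  apply Finset.prod_eq_one
  intro j hj
  obtain ⟨hji, hjr⟩ := Finset.mem_erase.mp hj
  have hjd : j ≤ d := Nat.lt_succ_iff.mp (Finset.mem_range.mp hjr)
  have hne : θ i - θ j ≠ 0 := by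
    refine sub_ne_zero_of_ne fun hc => hji ?_
    exact (hθ i hi j hjd hc).symm
  simp [inv_mul_cancel₀ hne]

lemma X_sub_C_mul_lag (d : ℕ) (θ : ℕ → K) (i : ℕ) (hi : i ≤ d) :
    (Polynomial.X - Polynomial.C (θ i)) * lagPoly d θ i
      = Polynomial.C (∏ j ∈ (Finset.range (d + 1)).erase i, (θ i - θ j)⁻¹) *
        ∏ j ∈ Finset.range (d + 1), (Polynomial.X - Polynomial.C (θ j)) := by
  rw [lagPoly, Finset.prod_mul_distrib, ← map_prod]
  rw [mul_left_comm]
  congr 1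
  exact Finset.mul_prod_erase (Finset.range (d+1))
    (fun j => Polynomial.X - Polynomial.C (θ j)) (Finset.mem_range.mpr (Nat.lt_succ_of_le hi))

lemma aeval_mul_lag (d : ℕ) (θ : ℕ → K) (M : Matrix (Fin (d+1)) (Fin (d+1)) K)
    (hz : Polynomial.aeval M
      (∏ j ∈ Finset.range (d + 1), (Polynomial.X - Polynomial.C (θ j))) = 0)
    (i : ℕ) (hi : i ≤ d) (p : Polynomial K) :
    Polynomial.aeval M (p * lagPoly d θ i) = p.eval (θ i) • primIdem d θ M i := by
  obtain ⟨q, hq⟩ := Polynomial.X_sub_C_dvd_sub_C_eval (a := θ i) (p := p)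
  have hp : p = Polynomial.C (p.eval (θ i)) + (Polynomial.X - Polynomial.C (θ i)) * q := by
    rw [← hq]; ring
  rw [hp]
  rw [add_mul, _root_.map_add]
  have h1 : Polynomial.aeval M (Polynomial.C (p.eval (θ i)) * lagPoly d θ i)
      = p.eval (θ i) • primIdem d θ M i := by
    rw [_root_.map_mul, Polynomial.aeval_C, Algebra.algebraMap_eq_smul_one, smul_mul_assoc,
      one_mul, primIdem_eq]
  have h2 : Polynomial.aeval M ((Polynomial.X - Polynomial.C (θ i)) * q * lagPoly d θ i)
      = 0 := by
    have : (Polynomial.X - Polynomial.C (θ i)) * q * lagPoly d θ i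
        = q * ((Polynomial.X - Polynomial.C (θ i)) * lagPoly d θ i) := by ring
    rw [this, X_sub_C_mul_lag d θ i hi, _root_.map_mul, _root_.map_mul, hz, mul_zero, mul_zero]
  rw [h1, h2, add_zero]
  simp

lemma aeval_mul_primIdem (d : ℕ) (θ : ℕ → K) (M : Matrix (Fin (d+1)) (Fin (d+1)) K)
    (hz : Polynomial.aeval M
      (∏ j ∈ Finset.range (d + 1), (Polynomial.X - Polynomial.C (θ j))) = 0)
    (i : ℕ) (hi : i ≤ d) (p : Polynomial K) :
    Polynomial.aeval M p * primIdem d θ M i = p.eval (θ i) • primIdem d θ M i := by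
  rw [primIdem_eq, ← _root_.map_mul, ← primIdem_eq, aeval_mul_lag d θ M hz i hi p]

lemma primIdem_mul_aeval (d : ℕ) (θ : ℕ → K) (M : Matrix (Fin (d+1)) (Fin (d+1)) K)
    (hz : Polynomial.aeval M
      (∏ j ∈ Finset.range (d + 1), (Polynomial.X - Polynomial.C (θ j))) = 0)
    (i : ℕ) (hi : i ≤ d) (p : Polynomial K) :
    primIdem d θ M i * Polynomial.aeval M p = p.eval (θ i) • primIdem d θ M i := by
  rw [primIdem_eq, ← _root_.map_mul, mul_comm (lagPoly d θ i) p, ← primIdem_eq,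
    aeval_mul_lag d θ M hz i hi p]

end Lag

section Dot
variable {K : Type*} [Field K]

lemma ee_dot {d : ℕ} (s : ℕ) (h : s ≤ d) (x : Fin (d+1) → K) :
    ee K d s ⬝ᵥ x = x ⟨s, Nat.lt_succ_of_le h⟩ := by
  rw [ee, dif_pos h, single_dotProduct, one_mul]

lemma dot_ee {d : ℕ} (s : ℕ) (h : s ≤ d) (x : Fin (d+1) → K) :
    x ⬝ᵥ ee K d s = x ⟨s, Nat.lt_succ_of_le h⟩ := by
  rw [ee, dif_pos h, dotProduct_single, mul_one]

lemma ee_dot_hi {d : ℕ} (s : ℕ) (h : ¬ s ≤ d) (x : Fin (d+1) → K) :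
    ee K d s ⬝ᵥ x = 0 := by
  rw [ee, dif_neg h, zero_dotProduct]

lemma dot_ee_hi {d : ℕ} (s : ℕ) (h : ¬ s ≤ d) (x : Fin (d+1) → K) :
    x ⬝ᵥ ee K d s = 0 := by
  rw [ee, dif_neg h, dotProduct_zero]

lemma mul_vecMulVec {n : Type*} [Fintype n] (M : Matrix n n K) (x y : n → K) :
    M * Matrix.vecMulVec x y = Matrix.vecMulVec (M *ᵥ x) y := by
  ext i j
  simp [Matrix.mul_apply, Matrix.vecMulVec_apply, Matrix.mulVec, dotProduct,
    Finset.sum_mul, mul_assoc]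

lemma vecMulVec_mul {n : Type*} [Fintype n] (M : Matrix n n K) (x y : n → K) :
    Matrix.vecMulVec x y * M = Matrix.vecMulVec x (y ᵥ* M) := by
  ext i j
  simp [Matrix.mul_apply, Matrix.vecMulVec_apply, Matrix.vecMul, dotProduct,
    Finset.mul_sum, mul_assoc]

end Dot

section Uniq
variable {K : Type*} [Field K]

lemma ee_dot_fin {d : ℕ} (k : Fin (d+1)) (x : Fin (d+1) → K) :
    ee K d (k:ℕ) ⬝ᵥ x = x k :=
  ee_dot (k:ℕ) (Nat.lt_succ_iff.mp k.isLt) x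

lemma dot_ee_fin {d : ℕ} (k : Fin (d+1)) (x : Fin (d+1) → K) :
    x ⬝ᵥ ee K d (k:ℕ) = x k :=
  dot_ee (k:ℕ) (Nat.lt_succ_iff.mp k.isLt) x

/-- right eigenvector of matAs for θs 0 is multiple of e₀ -/
lemma eig_As_right (d : ℕ) (θs φ : ℕ → K)
    (hdist : ∀ l, 1 ≤ l → l ≤ d → θs l ≠ θs 0)
    (x : Fin (d+1) → K) (heig : matAs d θs φ *ᵥ x = θs 0 • x) :
    x = (ee K d 0 ⬝ᵥ x) • ee K d 0 := by
  set X : ℕ → K := fun s => ee K d s ⬝ᵥ x with hX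
  have rel : ∀ l, l ≤ d → θs l * X l + φ (l+1) * X (l+1) = θs 0 * X l := by
    intro l hl
    have h1 : ee K d l ⬝ᵥ (matAs d θs φ *ᵥ x) = θs 0 * X l := by
      rw [heig, dotProduct_smul, smul_eq_mul]
    have h2 : ee K d l ⬝ᵥ (matAs d θs φ *ᵥ x) = θs l * X l + φ (l+1) * X (l+1) := by
      rw [Matrix.dotProduct_mulVec, rowAs d θs φ l hl, add_dotProduct,
        smul_dotProduct, smul_dotProduct, smul_eq_mul, smul_eq_mul]
    rw [← h1, h2]
  have vanish : ∀ m l, l + m = d → 1 ≤ l → X l = 0 := by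
    intro m
    induction m with
    | zero =>
      intro l hl h1
      have hr := rel l (by omega)
      have hX1 : X (l+1) = 0 := ee_dot_hi _ (by omega) _
      rw [hX1, mul_zero, add_zero] at hr
      have hz : (θs l - θs 0) * X l = 0 := by rw [sub_mul, hr, sub_self]
      rcases mul_eq_zero.mp hz with h | h
      · exact absurd (sub_eq_zero.mp h) (hdist l h1 (by omega))
      · exact h
    | succ m ih =>
      intro l hl h1
      have hr := rel l (by omega)
      have hX1 : X (l+1) = 0 := ih (l+1) (by omega) (by omega)
      rw [hX1, mul_zero, add_zero] at hr
      have hz : (θs l - θs 0) * X l = 0 := by rw [sub_mul, hr, sub_self]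
      rcases mul_eq_zero.mp hz with h | h
      · exact absurd (sub_eq_zero.mp h) (hdist l h1 (by omega))
      · exact h
  funext k
  have hkd : (k : ℕ) ≤ d := Nat.lt_succ_iff.mp k.isLt
  have hrhs : ((ee K d 0 ⬝ᵥ x) • ee K d 0) k = X 0 * (if (k:ℕ) = 0 then 1 else 0) := by
    rw [Pi.smul_apply, ee_apply, smul_eq_mul]
  rcases Nat.eq_zero_or_pos (k : ℕ) with hk | hk
  · have hk0 : k = (⟨0, Nat.succ_pos d⟩ : Fin (d+1)) := Fin.ext hk
    rw [hrhs, if_pos hk, mul_one, hk0]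
    exact (ee_dot 0 (Nat.zero_le d) x).symm
  · have h0 : X (k : ℕ) = 0 := vanish (d - (k:ℕ)) (k:ℕ) (by omega) hk
    rw [hrhs, if_neg (by omega), mul_zero]
    rw [← ee_dot_fin k x]
    exact h0

/-- left eigenvector of matA for θ 0 is multiple of e₀ -/
lemma eig_A_left (d : ℕ) (θ : ℕ → K)
    (x : Fin (d+1) → K) (heig : x ᵥ* matA d θ = θ 0 • x) :
    x = (x ⬝ᵥ ee K d 0) • ee K d 0 := by
  set Y : ℕ → K := fun s => x ⬝ᵥ ee K d s with hY
  have rel : ∀ l, l ≤ d → θ l * Y l + Y (l+1) = θ 0 * Y l := by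
    intro l hl
    have h1 : x ⬝ᵥ (matA d θ *ᵥ ee K d l) = θ 0 * Y l := by
      rw [Matrix.dotProduct_mulVec, heig, smul_dotProduct, smul_eq_mul]
    have h2 : x ⬝ᵥ (matA d θ *ᵥ ee K d l) = θ l * Y l + Y (l+1) := by
      rw [colA d θ l hl, dotProduct_add, dotProduct_smul, smul_eq_mul]
    rw [← h1, h2]
  have vanish : ∀ l, l ≤ d → 1 ≤ l → Y l = 0 := by
    intro l
    induction l with
    | zero => omega
    | succ l ih =>
      intro hl _
      have hr := rel l (by omega)
      have hstep : Y (l+1) = (θ 0 - θ l) * Y l := by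
        rw [sub_mul]; linear_combination hr
      rcases Nat.eq_zero_or_pos l with h0 | h0
      · rw [hstep, h0, sub_self, zero_mul]
      · rw [hstep, ih (by omega) h0, mul_zero]
  funext k
  have hkd : (k : ℕ) ≤ d := Nat.lt_succ_iff.mp k.isLt
  have hrhs : ((x ⬝ᵥ ee K d 0) • ee K d 0) k = Y 0 * (if (k:ℕ) = 0 then 1 else 0) := by
    rw [Pi.smul_apply, ee_apply, smul_eq_mul]
  rcases Nat.eq_zero_or_pos (k : ℕ) with hk | hk
  · have hk0 : k = (⟨0, Nat.succ_pos d⟩ : Fin (d+1)) := Fin.ext hk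
    rw [hrhs, if_pos hk, mul_one, hk0]
    exact (dot_ee 0 (Nat.zero_le d) x).symm
  · have h0 : Y (k : ℕ) = 0 := vanish (k:ℕ) hkd hk
    rw [hrhs, if_neg (by omega), mul_zero]
    rw [← dot_ee_fin k x]
    exact h0

/-- right eigenvector of matA for θ d is multiple of e_d -/
lemma eig_A_right (d : ℕ) (θ : ℕ → K)
    (hdist : ∀ l, l < d → θ l ≠ θ d)
    (x : Fin (d+1) → K) (heig : matA d θ *ᵥ x = θ d • x) :
    x = (ee K d d ⬝ᵥ x) • ee K d d := by
  set X : ℕ → K := fun s => ee K d s ⬝ᵥ x with hX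
  have rel : ∀ l, l ≤ d → (if 1 ≤ l then θ l * X l + X (l-1) else θ l * X l) = θ d * X l := by
    intro l hl
    have h1 : ee K d l ⬝ᵥ (matA d θ *ᵥ x) = θ d * X l := by
      rw [heig, dotProduct_smul, smul_eq_mul]
    rcases Nat.eq_zero_or_pos l with h0 | h0
    · subst h0
      have h2 : ee K d 0 ⬝ᵥ (matA d θ *ᵥ x) = θ 0 * X 0 := by
        rw [Matrix.dotProduct_mulVec, rowA0, smul_dotProduct, smul_eq_mul]
      simp only [if_neg (by omega : ¬ (1:ℕ) ≤ 0)]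
      rw [← h1, h2]
    · have h2 : ee K d l ⬝ᵥ (matA d θ *ᵥ x) = θ l * X l + X (l-1) := by
        rw [Matrix.dotProduct_mulVec, rowA d θ l h0 hl, add_dotProduct,
          smul_dotProduct, smul_eq_mul]
      rw [if_pos (by omega : 1 ≤ l), ← h1, h2]
  have vanish : ∀ l, l < d → X l = 0 := by
    intro l
    induction l with
    | zero =>
      intro hl
      have hr := rel 0 (by omega)
      simp only [if_neg (by omega : ¬ (1:ℕ) ≤ 0)] at hr
      have hz : (θ 0 - θ d) * X 0 = 0 := by rw [sub_mul, hr, sub_self]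
      rcases mul_eq_zero.mp hz with h | h
      · exact absurd (sub_eq_zero.mp h) (hdist 0 hl)
      · exact h
    | succ l ih =>
      intro hl
      have hr := rel (l+1) (by omega)
      simp only [if_pos (by omega : (1:ℕ) ≤ l + 1), Nat.add_sub_cancel] at hr
      rw [ih (by omega)] at hr
      rw [add_zero] at hr
      have hz : (θ (l+1) - θ d) * X (l+1) = 0 := by rw [sub_mul, hr, sub_self]
      rcases mul_eq_zero.mp hz with h | h
      · exact absurd (sub_eq_zero.mp h) (hdist (l+1) hl)
      · exact h
  funext k
  have hkd : (k : ℕ) ≤ d := Nat.lt_succ_iff.mp k.isLt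
  have hrhs : ((ee K d d ⬝ᵥ x) • ee K d d) k = X d * (if (k:ℕ) = d then 1 else 0) := by
    rw [Pi.smul_apply, ee_apply, smul_eq_mul]
  rcases eq_or_ne (k : ℕ) d with hk | hk
  · have hk0 : k = (⟨d, Nat.lt_succ_of_le le_rfl⟩ : Fin (d+1)) := Fin.ext hk
    rw [hrhs, if_pos hk, mul_one, hk0]
    exact (ee_dot d le_rfl x).symm
  · have h0 : X (k : ℕ) = 0 := vanish (k:ℕ) (by omega)
    rw [hrhs, if_neg hk, mul_zero]
    rw [← ee_dot_fin k x]
    exact h0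

/-- left eigenvector of matAs for θs d is multiple of e_d -/
lemma eig_As_left (d : ℕ) (θs φ : ℕ → K)
    (hdist : ∀ l, l < d → θs l ≠ θs d)
    (x : Fin (d+1) → K) (heig : x ᵥ* matAs d θs φ = θs d • x) :
    x = (x ⬝ᵥ ee K d d) • ee K d d := by
  set Y : ℕ → K := fun s => x ⬝ᵥ ee K d s with hY
  have rel : ∀ l, l ≤ d → (if 1 ≤ l then θs l * Y l + φ l * Y (l-1) else θs l * Y l)
      = θs d * Y l := by
    intro l hl
    have h1 : x ⬝ᵥ (matAs d θs φ *ᵥ ee K d l) = θs d * Y l := by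
      rw [Matrix.dotProduct_mulVec, heig, smul_dotProduct, smul_eq_mul]
    rcases Nat.eq_zero_or_pos l with h0 | h0
    · subst h0
      have h2 : x ⬝ᵥ (matAs d θs φ *ᵥ ee K d 0) = θs 0 * Y 0 := by
        rw [colAs0, dotProduct_smul, smul_eq_mul]
      simp only [if_neg (by omega : ¬ (1:ℕ) ≤ 0)]
      rw [← h1, h2]
    · have h2 : x ⬝ᵥ (matAs d θs φ *ᵥ ee K d l) = θs l * Y l + φ l * Y (l-1) := by
        rw [colAs d θs φ l h0 hl, dotProduct_add, dotProduct_smul,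
          dotProduct_smul, smul_eq_mul, smul_eq_mul]
      rw [if_pos (by omega : 1 ≤ l), ← h1, h2]
  have vanish : ∀ l, l < d → Y l = 0 := by
    intro l
    induction l with
    | zero =>
      intro hl
      have hr := rel 0 (by omega)
      simp only [if_neg (by omega : ¬ (1:ℕ) ≤ 0)] at hr
      have hz : (θs 0 - θs d) * Y 0 = 0 := by rw [sub_mul, hr, sub_self]
      rcases mul_eq_zero.mp hz with h | h
      · exact absurd (sub_eq_zero.mp h) (hdist 0 hl)
      · exact h
    | succ l ih =>
      intro hl
      have hr := rel (l+1) (by omega)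
      simp only [if_pos (by omega : (1:ℕ) ≤ l + 1), Nat.add_sub_cancel] at hr
      rw [ih (by omega), mul_zero, add_zero] at hr
      have hz : (θs (l+1) - θs d) * Y (l+1) = 0 := by rw [sub_mul, hr, sub_self]
      rcases mul_eq_zero.mp hz with h | h
      · exact absurd (sub_eq_zero.mp h) (hdist (l+1) hl)
      · exact h
  funext k
  have hkd : (k : ℕ) ≤ d := Nat.lt_succ_iff.mp k.isLt
  have hrhs : ((x ⬝ᵥ ee K d d) • ee K d d) k = Y d * (if (k:ℕ) = d then 1 else 0) := by
    rw [Pi.smul_apply, ee_apply, smul_eq_mul]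
  rcases eq_or_ne (k : ℕ) d with hk | hk
  · have hk0 : k = (⟨d, Nat.lt_succ_of_le le_rfl⟩ : Fin (d+1)) := Fin.ext hk
    rw [hrhs, if_pos hk, mul_one, hk0]
    exact (dot_ee d le_rfl x).symm
  · have h0 : Y (k : ℕ) = 0 := vanish (k:ℕ) (by omega)
    rw [hrhs, if_neg hk, mul_zero]
    rw [← dot_ee_fin k x]
    exact h0

end Uniq

section Struct
variable {K : Type*} [Field K]

lemma mulVec_ee_fin {d : ℕ} (M : Matrix (Fin (d+1)) (Fin (d+1)) K) (l : Fin (d+1)) :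
    M *ᵥ ee K d (l:ℕ) = fun k => M k l := by
  rw [ee, dif_pos (Nat.lt_succ_iff.mp l.isLt), Matrix.mulVec_single]
  funext k
  simp only [Pi.smul_apply, MulOpposite.op_one, one_smul, Matrix.col_apply]

lemma vecMul_ee_fin {d : ℕ} (M : Matrix (Fin (d+1)) (Fin (d+1)) K) (k : Fin (d+1)) :
    ee K d (k:ℕ) ᵥ* M = M k := by
  rw [ee, dif_pos (Nat.lt_succ_iff.mp k.isLt), Matrix.single_vecMul]
  funext l
  simp only [Pi.smul_apply, one_smul, Matrix.row_apply]

lemma ee_hi {d : ℕ} (s : ℕ) (h : ¬ s ≤ d) : ee K d s = (0 : Fin (d+1) → K) := dif_neg h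

lemma colA_last (d : ℕ) (θ : ℕ → K) : matA d θ *ᵥ ee K d d = θ d • ee K d d := by
  rw [colA d θ d le_rfl, ee_hi (d+1) (by omega), add_zero]

lemma rowAs_last (d : ℕ) (θs φ : ℕ → K) :
    ee K d d ᵥ* matAs d θs φ = θs d • ee K d d := by
  rw [rowAs d θs φ d le_rfl, ee_hi (d+1) (by omega), smul_zero, add_zero]

lemma prod_Icc_step (f : ℕ → K) (a b : ℕ) (h : a ≤ b) :
    ∏ k ∈ Finset.Icc a b, f k = f a * ∏ k ∈ Finset.Icc (a+1) b, f k := by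
  rw [Finset.Icc_add_one_left_eq_Ioc, ← Finset.Ioc_insert_left h, Finset.prod_insert Finset.left_notMem_Ioc]

/-- structure of Es0 * E0 : rank one supported at (0,0) -/
lemma struct_low (d : ℕ) (θ θs φ : ℕ → K)
    (hdθs : ∀ l, 1 ≤ l → l ≤ d → θs l ≠ θs 0) :
    primIdem d θs (matAs d θs φ) 0 * primIdem d θ (matA d θ) 0
      = (primIdem d θs (matAs d θs φ) 0 * primIdem d θ (matA d θ) 0)
          ⟨0, Nat.succ_pos d⟩ ⟨0, Nat.succ_pos d⟩ •
        Matrix.vecMulVec (ee K d 0) (ee K d 0) := by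
  set z0 : Fin (d+1) := ⟨0, Nat.succ_pos d⟩ with hz0
  set P := primIdem d θs (matAs d θs φ) 0 * primIdem d θ (matA d θ) 0 with hP
  have hAsP : matAs d θs φ * P = θs 0 • P := by
    rw [hP, ← mul_assoc]
    have : matAs d θs φ * primIdem d θs (matAs d θs φ) 0
        = θs 0 • primIdem d θs (matAs d θs φ) 0 := by
      have h := aeval_mul_primIdem d θs (matAs d θs φ) (charZeroAs d θs φ) 0 (Nat.zero_le d)
        Polynomial.X
      rwa [Polynomial.aeval_X, Polynomial.eval_X] at h
    rw [this, smul_mul_assoc]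
  have hPA : P * matA d θ = θ 0 • P := by
    rw [hP, mul_assoc]
    have : primIdem d θ (matA d θ) 0 * matA d θ = θ 0 • primIdem d θ (matA d θ) 0 := by
      have h := primIdem_mul_aeval d θ (matA d θ) (charZeroA d θ) 0 (Nat.zero_le d)
        Polynomial.X
      rwa [Polynomial.aeval_X, Polynomial.eval_X] at h
    rw [this, mul_smul_comm]
  have col : ∀ l : Fin (d+1), P *ᵥ ee K d (l:ℕ)
      = (ee K d 0 ⬝ᵥ (P *ᵥ ee K d (l:ℕ))) • ee K d 0 := by
    intro l
    apply eig_As_right d θs φ hdθs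
    rw [Matrix.mulVec_mulVec, hAsP, Matrix.smul_mulVec]
  have row : ee K d 0 ᵥ* P = ((ee K d 0 ᵥ* P) ⬝ᵥ ee K d 0) • ee K d 0 := by
    apply eig_A_left d θ
    rw [Matrix.vecMul_vecMul, hPA, vecMul_smul_mat]
  ext k l
  have hcol := congrFun (col l) k
  rw [mulVec_ee_fin] at hcol
  have hc : (ee K d 0 ⬝ᵥ fun k => P k l) = P z0 l := ee_dot_fin z0 _
  rw [hc] at hcol
  -- hcol : P k l = (P z0 l) * ee0 k  (as applied function)
  have hrow := congrFun row l
  have hez : ee K d ((z0 : Fin (d+1)):ℕ) = ee K d 0 := rfl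
  have hrow0 : P z0 l = ((P z0) ⬝ᵥ ee K d 0) * ee K d 0 l := by
    have := congrFun row l
    rw [← hez, vecMul_ee_fin] at this
    simpa using this
  have hPd : (P z0) ⬝ᵥ ee K d 0 = P z0 z0 := dot_ee_fin z0 _
  rw [hPd] at hrow0
  rw [Matrix.smul_apply, Matrix.vecMulVec_apply, smul_eq_mul]
  calc P k l = (P z0 l) • ee K d 0 k := hcol
    _ = (P z0 z0 * ee K d 0 l) * ee K d 0 k := by rw [hrow0]; rfl
    _ = P z0 z0 * (ee K d 0 k * ee K d 0 l) := by ring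

/-- structure of Ed * Esd : rank one supported at (d,d) -/
lemma struct_high (d : ℕ) (θ θs φ : ℕ → K)
    (hdθ : ∀ l, l < d → θ l ≠ θ d) (hdθs : ∀ l, l < d → θs l ≠ θs d) :
    primIdem d θ (matA d θ) d * primIdem d θs (matAs d θs φ) d
      = (primIdem d θ (matA d θ) d * primIdem d θs (matAs d θs φ) d)
          ⟨d, Nat.lt_succ_of_le le_rfl⟩ ⟨d, Nat.lt_succ_of_le le_rfl⟩ •
        Matrix.vecMulVec (ee K d d) (ee K d d) := by
  set zd : Fin (d+1) := ⟨d, Nat.lt_succ_of_le le_rfl⟩ with hzd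
  set P := primIdem d θ (matA d θ) d * primIdem d θs (matAs d θs φ) d with hP
  have hAP : matA d θ * P = θ d • P := by
    rw [hP, ← mul_assoc]
    have : matA d θ * primIdem d θ (matA d θ) d = θ d • primIdem d θ (matA d θ) d := by
      have h := aeval_mul_primIdem d θ (matA d θ) (charZeroA d θ) d le_rfl Polynomial.X
      rwa [Polynomial.aeval_X, Polynomial.eval_X] at h
    rw [this, smul_mul_assoc]
  have hPAs : P * matAs d θs φ = θs d • P := by
    rw [hP, mul_assoc]
    have : primIdem d θs (matAs d θs φ) d * matAs d θs φ
        = θs d • primIdem d θs (matAs d θs φ) d := by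
      have h := primIdem_mul_aeval d θs (matAs d θs φ) (charZeroAs d θs φ) d le_rfl
        Polynomial.X
      rwa [Polynomial.aeval_X, Polynomial.eval_X] at h
    rw [this, mul_smul_comm]
  have col : ∀ l : Fin (d+1), P *ᵥ ee K d (l:ℕ)
      = (ee K d d ⬝ᵥ (P *ᵥ ee K d (l:ℕ))) • ee K d d := by
    intro l
    apply eig_A_right d θ hdθ
    rw [Matrix.mulVec_mulVec, hAP, Matrix.smul_mulVec]
  have row : ee K d d ᵥ* P = ((ee K d d ᵥ* P) ⬝ᵥ ee K d d) • ee K d d := by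
    apply eig_As_left d θs φ hdθs
    rw [Matrix.vecMul_vecMul, hPAs, vecMul_smul_mat]
  ext k l
  have hcol := congrFun (col l) k
  rw [mulVec_ee_fin] at hcol
  have hc : (ee K d d ⬝ᵥ fun k => P k l) = P zd l := ee_dot_fin zd _
  rw [hc] at hcol
  have hez : ee K d ((zd : Fin (d+1)):ℕ) = ee K d d := rfl
  have hrow0 : P zd l = ((P zd) ⬝ᵥ ee K d d) * ee K d d l := by
    have := congrFun row l
    rw [← hez, vecMul_ee_fin] at this
    simpa using this
  have hPd : (P zd) ⬝ᵥ ee K d d = P zd zd := dot_ee_fin zd _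
  rw [hPd] at hrow0
  rw [Matrix.smul_apply, Matrix.vecMulVec_apply, smul_eq_mul]
  calc P k l = (P zd l) • ee K d d k := hcol
    _ = (P zd zd * ee K d d l) * ee K d d k := by rw [hrow0]; rfl
    _ = P zd zd * (ee K d d k * ee K d d l) := by ring

end Struct

section Chains
variable {K : Type*} [Field K]

lemma tauA_mulVec (d : ℕ) (θ : ℕ → K) :
    ∀ i, i ≤ d → Polynomial.aeval (matA d θ) (tauPoly θ i) *ᵥ ee K d 0 = ee K d i := by
  intro i
  induction i with
  | zero => intro _; rw [tauPoly, Finset.prod_range_zero, _root_.map_one, Matrix.one_mulVec]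
  | succ i ih =>
    intro hi
    rw [tauPoly, Finset.prod_range_succ_comm, _root_.map_mul, ← Matrix.mulVec_mulVec,
      ← tauPoly, ih (by omega), aeval_X_sub_C, Matrix.sub_mulVec, colA d θ i (by omega),
      Matrix.smul_mulVec, Matrix.one_mulVec, add_sub_cancel_left]

lemma tausAs_vecMul (d : ℕ) (θs φ : ℕ → K) :
    ∀ j, j ≤ d → ee K d 0 ᵥ* Polynomial.aeval (matAs d θs φ) (tauPoly θs j)
      = (∏ k ∈ Finset.Icc 1 j, φ k) • ee K d j := by
  intro j
  induction j with
  | zero =>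
    intro _
    rw [tauPoly, Finset.prod_range_zero, _root_.map_one, Matrix.vecMul_one]
    rw [show Finset.Icc 1 0 = (∅ : Finset ℕ) by rfl, Finset.prod_empty, one_smul]
  | succ j ih =>
    intro hj
    rw [tauPoly, Finset.prod_range_succ, _root_.map_mul, ← Matrix.vecMul_vecMul, ← tauPoly,
      ih (by omega), aeval_X_sub_C, Matrix.smul_vecMul, Matrix.vecMul_sub,
      rowAs d θs φ j (by omega), vecMul_smul_mat, Matrix.vecMul_one, add_sub_cancel_left,
      Finset.prod_Icc_succ_top (by omega : 1 ≤ j + 1), smul_smul]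

lemma etasAs_mulVec (d : ℕ) (θs φ : ℕ → K) :
    ∀ m, m ≤ d → Polynomial.aeval (matAs d θs φ) (etaPoly d θs m) *ᵥ ee K d d
      = (∏ k ∈ Finset.Icc (d - m + 1) d, φ k) • ee K d (d - m) := by
  intro m
  induction m with
  | zero =>
    intro _
    rw [etaPoly, Finset.prod_range_zero, _root_.map_one, Matrix.one_mulVec]
    rw [show Finset.Icc (d - 0 + 1) d = (∅ : Finset ℕ) from Finset.Icc_eq_empty (by omega),
      Finset.prod_empty, one_smul]
    rfl
  | succ m ih =>
    intro hm
    rw [etaPoly, Finset.prod_range_succ_comm, _root_.map_mul, ← Matrix.mulVec_mulVec,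
      ← etaPoly, ih (by omega), Matrix.mulVec_smul, aeval_X_sub_C, Matrix.sub_mulVec,
      colAs d θs φ (d - m) (by omega) (by omega), Matrix.smul_mulVec,
      Matrix.one_mulVec, add_sub_cancel_left, smul_smul]
    rw [show d - (m + 1) = d - m - 1 by omega]
    congr 1
    rw [show d - m - 1 + 1 = d - m by omega, prod_Icc_step φ (d - m) d (by omega)]
    ring

lemma etaA_vecMul (d : ℕ) (θ : ℕ → K) :
    ∀ m, m ≤ d → ee K d d ᵥ* Polynomial.aeval (matA d θ) (etaPoly d θ m) = ee K d (d - m) := by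
  intro m
  induction m with
  | zero =>
    intro _
    rw [etaPoly, Finset.prod_range_zero, _root_.map_one, Matrix.vecMul_one]
    rfl
  | succ m ih =>
    intro hm
    rw [etaPoly, Finset.prod_range_succ, _root_.map_mul, ← Matrix.vecMul_vecMul, ← etaPoly,
      ih (by omega), aeval_X_sub_C, Matrix.vecMul_sub, rowA d θ (d - m) (by omega) (by omega),
      vecMul_smul_mat, Matrix.vecMul_one, add_sub_cancel_left]
    rw [show d - m - 1 = d - (m + 1) by omega]

end Chains

section ScalarLow
variable {K : Type*} [Field K]

lemma vecMulVec_mulVec {n : Type*} [Fintype n] (x y w : n → K) :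
    Matrix.vecMulVec x y *ᵥ w = (y ⬝ᵥ w) • x := by
  ext i
  simp only [Matrix.mulVec, Matrix.vecMulVec_apply, dotProduct, Pi.smul_apply,
    smul_eq_mul, Finset.sum_mul]
  apply Finset.sum_congr rfl
  intro j _
  ring

lemma vecMul_vecMulVec {n : Type*} [Fintype n] (x y w : n → K) :
    w ᵥ* Matrix.vecMulVec x y = (w ⬝ᵥ x) • y := by
  ext i
  simp only [Matrix.vecMul, Matrix.vecMulVec_apply, dotProduct, Pi.smul_apply,
    smul_eq_mul, Finset.sum_mul]
  apply Finset.sum_congr rfl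
  intro j _
  ring

lemma chainC1 (d : ℕ) (θ : ℕ → K) (v : ℕ → Fin (d + 1) → K)
    (hv1 : ∀ i < d, (matA d θ).mulVec (v i) - θ (d - i) • v i = v (i + 1)) :
    ∀ k ≤ d, Polynomial.aeval (matA d θ) (etaPoly d θ k) *ᵥ v 0 = v k := by
  intro k
  induction k with
  | zero => intro _; rw [etaPoly, Finset.prod_range_zero, _root_.map_one, Matrix.one_mulVec]
  | succ k ih =>
    intro hk
    rw [etaPoly, Finset.prod_range_succ_comm, _root_.map_mul, ← Matrix.mulVec_mulVec,
      ← etaPoly, ih (by omega), aeval_X_sub_C, Matrix.sub_mulVec, Matrix.smul_mulVec,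
      Matrix.one_mulVec]
    exact hv1 k (by omega)

lemma chainC2 (d : ℕ) (θs φ ϕ : ℕ → K) (v : ℕ → Fin (d + 1) → K)
    (hv3 : ∀ i, 1 ≤ i → i ≤ d →
      (matAs d θs φ).mulVec (v i) - θs i • v i = ϕ i • v (i - 1)) :
    ∀ k ≤ d, Polynomial.aeval (matAs d θs φ) (etaPoly d θs k) *ᵥ v d
      = (∏ t ∈ Finset.Icc (d - k + 1) d, ϕ t) • v (d - k) := by
  intro k
  induction k with
  | zero =>
    intro _
    rw [etaPoly, Finset.prod_range_zero, _root_.map_one, Matrix.one_mulVec,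
      show Finset.Icc (d - 0 + 1) d = (∅ : Finset ℕ) from Finset.Icc_eq_empty (by omega),
      Finset.prod_empty, one_smul]
    rfl
  | succ k ih =>
    intro hk
    rw [etaPoly, Finset.prod_range_succ_comm, _root_.map_mul, ← Matrix.mulVec_mulVec,
      ← etaPoly, ih (by omega), Matrix.mulVec_smul, aeval_X_sub_C, Matrix.sub_mulVec,
      Matrix.smul_mulVec, Matrix.one_mulVec]
    rw [hv3 (d - k) (by omega) (by omega), smul_smul]
    rw [show d - k - 1 = d - (k + 1) by omega]
    congr 1
    rw [show d - (k + 1) + 1 = d - k by omega, prod_Icc_step ϕ (d - k) d (by omega)]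
    ring

lemma scalar_low (d : ℕ) (θ θs φ ϕ : ℕ → K)
    (hθ : ∀ i ≤ d, ∀ j ≤ d, θ i = θ j → i = j)
    (hθs : ∀ i ≤ d, ∀ j ≤ d, θs i = θs j → i = j)
    (v : ℕ → Fin (d + 1) → K)
    (hvli : LinearIndependent K fun i : Fin (d + 1) => v (i : ℕ))
    (hv1 : ∀ i < d, (matA d θ).mulVec (v i) - θ (d - i) • v i = v (i + 1))
    (hv2 : (matA d θ).mulVec (v d) - θ 0 • v d = 0)
    (hv3 : ∀ i, 1 ≤ i → i ≤ d →
      (matAs d θs φ).mulVec (v i) - θs i • v i = ϕ i • v (i - 1))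
    (hv4 : (matAs d θs φ).mulVec (v 0) - θs 0 • v 0 = 0) :
    (etaPoly d θ d).eval (θ 0) * (etaPoly d θs d).eval (θs 0) *
      ((primIdem d θs (matAs d θs φ) 0 * primIdem d θ (matA d θ) 0)
        ⟨0, Nat.succ_pos d⟩ ⟨0, Nat.succ_pos d⟩)
      = ∏ t ∈ Finset.Icc 1 d, ϕ t := by
  set z0 : Fin (d+1) := ⟨0, Nat.succ_pos d⟩ with hz0
  have hvd_eig : matA d θ *ᵥ v d = θ 0 • v d := by
    have := hv2; rwa [sub_eq_zero] at this
  have hv0_eig : matAs d θs φ *ᵥ v 0 = θs 0 • v 0 := by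
    have := hv4; rwa [sub_eq_zero] at this
  have hdθs : ∀ l, 1 ≤ l → l ≤ d → θs l ≠ θs 0 := by
    intro l h1 h2 heq
    have := hθs l h2 0 (Nat.zero_le d) heq
    omega
  have hv0e0 : v 0 = (ee K d 0 ⬝ᵥ v 0) • ee K d 0 :=
    eig_As_right d θs φ hdθs (v 0) hv0_eig
  set β : K := ee K d 0 ⬝ᵥ v 0 with hβ
  have hβne : β ≠ 0 := by
    intro h0
    have : v 0 = 0 := by rw [hv0e0, h0, zero_smul]
    exact hvli.ne_zero z0 this
  -- E0 fixes v d
  have hE0vd : primIdem d θ (matA d θ) 0 *ᵥ v d = v d := by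
    rw [primIdem_eq]
    rw [mulVec_aeval_eig (matA d θ) (v d) (θ 0) hvd_eig,
      lag_eval_self d θ 0 (Nat.zero_le d) hθ, one_smul]
  -- Es0 fixes ee0
  have hEs0e0 : primIdem d θs (matAs d θs φ) 0 *ᵥ ee K d 0 = ee K d 0 := by
    rw [primIdem_eq, mulVec_aeval_eig (matAs d θs φ) (ee K d 0) (θs 0) (colAs0 d θs φ),
      lag_eval_self d θs 0 (Nat.zero_le d) hθs, one_smul]
  -- the two evaluations of S
  have hC2 := chainC2 d θs φ ϕ v hv3 d le_rfl
  rw [show d - d = 0 by omega] at hC2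
  simp only [Nat.zero_add] at hC2
  have way1 : ee K d 0 ⬝ᵥ (primIdem d θs (matAs d θs φ) 0 *ᵥ
      (Polynomial.aeval (matAs d θs φ) (etaPoly d θs d) *ᵥ v d))
      = (∏ t ∈ Finset.Icc 1 d, ϕ t) * β := by
    rw [hC2]
    nth_rewrite 1 [hv0e0]
    rw [Matrix.mulVec_smul, Matrix.mulVec_smul, hEs0e0, dotProduct_smul,
      dotProduct_smul, ee_dot 0 (Nat.zero_le d) (ee K d 0), ee_apply]
    simp
  have way2 : ee K d 0 ⬝ᵥ (primIdem d θs (matAs d θs φ) 0 *ᵥ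
      (Polynomial.aeval (matAs d θs φ) (etaPoly d θs d) *ᵥ v d))
      = (etaPoly d θ d).eval (θ 0) * (etaPoly d θs d).eval (θs 0) *
        ((primIdem d θs (matAs d θs φ) 0 * primIdem d θ (matA d θ) 0) z0 z0) * β := by
    rw [Matrix.mulVec_mulVec,
      primIdem_mul_aeval d θs (matAs d θs φ) (charZeroAs d θs φ) 0 (Nat.zero_le d),
      Matrix.smul_mulVec]
    -- Es0 *ᵥ v d = Es0 *ᵥ (E0 *ᵥ v d) = (Es0 * E0) *ᵥ v d
    rw [← hE0vd, Matrix.mulVec_mulVec]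
    rw [struct_low d θ θs φ hdθs]
    rw [Matrix.smul_mulVec, _root_.vecMulVec_mulVec]
    -- ee0 ⬝ᵥ v d = η(θ0) β
    have hγ : ee K d 0 ⬝ᵥ v d = (etaPoly d θ d).eval (θ 0) * β := by
      rw [← chainC1 d θ v hv1 d le_rfl, Matrix.dotProduct_mulVec]
      rw [vecMul_aeval_eig (matA d θ) (ee K d 0) (θ 0) (rowA0 d θ), smul_dotProduct,
        smul_eq_mul, hβ]
    rw [hγ]
    rw [dotProduct_smul, dotProduct_smul, dotProduct_smul]
    rw [ee_dot 0 (Nat.zero_le d) (ee K d 0), ee_apply, Matrix.smul_apply,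
      Matrix.vecMulVec_apply, ee_apply]
    simp only [smul_eq_mul]
    split_ifs <;> first | (exfalso; rename_i h; exact h (by simp [hz0])) | ring | simp_all
  have := way1.symm.trans way2
  have hfin : ((etaPoly d θ d).eval (θ 0) * (etaPoly d θs d).eval (θs 0) *
      ((primIdem d θs (matAs d θs φ) 0 * primIdem d θ (matA d θ) 0) z0 z0)
      - ∏ t ∈ Finset.Icc 1 d, ϕ t) * β = 0 := by
    rw [sub_mul, this]
    ring
  rcases mul_eq_zero.mp hfin with h | h
  · have := sub_eq_zero.mp h
    rw [this]
  · exact absurd h hβne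

end ScalarLow

section ScalarHigh
variable {K : Type*} [Field K]

lemma eq_of_cols {d : ℕ} {M N : Matrix (Fin (d+1)) (Fin (d+1)) K}
    (h : ∀ l : Fin (d+1), M *ᵥ ee K d (l:ℕ) = N *ᵥ ee K d (l:ℕ)) : M = N := by
  have : M - N = 0 := by
    apply cols_zero
    intro s
    rw [Matrix.sub_mulVec, h, sub_self]
  ext k l
  have := congrFun (congrFun this k) l
  simp only [Matrix.sub_apply, Matrix.zero_apply] at this
  exact sub_eq_zero.mp this

lemma scalar_high (d : ℕ) (θ θs φ ϕ : ℕ → K)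
    (hθ : ∀ i ≤ d, ∀ j ≤ d, θ i = θ j → i = j)
    (hθs : ∀ i ≤ d, ∀ j ≤ d, θs i = θs j → i = j)
    (v : ℕ → Fin (d + 1) → K)
    (hvli : LinearIndependent K fun i : Fin (d + 1) => v (i : ℕ))
    (hvsp : Submodule.span K (Set.range fun i : Fin (d + 1) => v (i : ℕ)) = ⊤)
    (hv1 : ∀ i < d, (matA d θ).mulVec (v i) - θ (d - i) • v i = v (i + 1))
    (hv2 : (matA d θ).mulVec (v d) - θ 0 • v d = 0)
    (hv3 : ∀ i, 1 ≤ i → i ≤ d →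
      (matAs d θs φ).mulVec (v i) - θs i • v i = ϕ i • v (i - 1))
    (hv4 : (matAs d θs φ).mulVec (v 0) - θs 0 • v 0 = 0) :
    (tauPoly θ d).eval (θ d) * (tauPoly θs d).eval (θs d) *
      ((primIdem d θ (matA d θ) d * primIdem d θs (matAs d θs φ) d)
        ⟨d, Nat.lt_succ_of_le le_rfl⟩ ⟨d, Nat.lt_succ_of_le le_rfl⟩)
      = ∏ t ∈ Finset.Icc 1 d, ϕ t := by
  classical
  set zd : Fin (d+1) := ⟨d, Nat.lt_succ_of_le le_rfl⟩ with hzd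
  set B : Matrix (Fin (d+1)) (Fin (d+1)) K := matA d (fun k => θ (d - k)) with hB
  set Bs : Matrix (Fin (d+1)) (Fin (d+1)) K := matAs d θs ϕ with hBs
  set e : Module.Basis (Fin (d+1)) K (Fin (d+1) → K) := Pi.basisFun K (Fin (d+1)) with he
  set b : Module.Basis (Fin (d+1)) K (Fin (d+1) → K) := Module.Basis.mk hvli hvsp.ge with hb
  set V : Matrix (Fin (d+1)) (Fin (d+1)) K := e.toMatrix ⇑b with hV
  set W : Matrix (Fin (d+1)) (Fin (d+1)) K := b.toMatrix ⇑e with hW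
  have hVW : V * W = 1 := Module.Basis.toMatrix_mul_toMatrix_flip e b
  have hWV : W * V = 1 := Module.Basis.toMatrix_mul_toMatrix_flip b e
  have hVcol : ∀ l : Fin (d+1), V *ᵥ ee K d (l:ℕ) = v (l:ℕ) := by
    intro l
    rw [mulVec_ee_fin]
    funext k
    rw [hV, Module.Basis.toMatrix_apply, he, Pi.basisFun_repr, hb, Module.Basis.mk_apply]
  have hVcol' : ∀ s : ℕ, s ≤ d → V *ᵥ ee K d s = v s := by
    intro s hs
    exact hVcol ⟨s, Nat.lt_succ_of_le hs⟩
  -- A V = V B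
  have hAV : matA d θ * V = V * B := by
    apply eq_of_cols
    intro l
    have hld : (l:ℕ) ≤ d := Nat.lt_succ_iff.mp l.isLt
    rw [← Matrix.mulVec_mulVec, ← Matrix.mulVec_mulVec, hVcol]
    rcases eq_or_ne (l:ℕ) d with hl | hl
    · rw [hl]
      rw [hB, colA d (fun k => θ (d - k)) d le_rfl, ee_hi (d+1) (by omega),
        add_zero, Matrix.mulVec_smul, hVcol' d le_rfl]
      rw [show d - d = 0 by omega]
      rw [← sub_eq_zero]
      exact hv2
    · have hld' : (l:ℕ) < d := by omega
      rw [hB, colA d (fun k => θ (d - k)) (l:ℕ) hld, Matrix.mulVec_add,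
        Matrix.mulVec_smul, hVcol' (l:ℕ) hld, hVcol' ((l:ℕ)+1) (by omega)]
      have := hv1 (l:ℕ) hld'
      rw [sub_eq_iff_eq_add] at this
      rw [this]
      ring_nf
  -- As V = V Bs
  have hAsV : matAs d θs φ * V = V * Bs := by
    apply eq_of_cols
    intro l
    have hld : (l:ℕ) ≤ d := Nat.lt_succ_iff.mp l.isLt
    rw [← Matrix.mulVec_mulVec, ← Matrix.mulVec_mulVec, hVcol]
    rcases Nat.eq_zero_or_pos (l:ℕ) with hl | hl
    · rw [hl]
      rw [hBs, colAs0 d θs ϕ, Matrix.mulVec_smul, hVcol' 0 (Nat.zero_le d)]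
      rw [← sub_eq_zero]
      exact hv4
    · rw [hBs, colAs d θs ϕ (l:ℕ) hl hld, Matrix.mulVec_add, Matrix.mulVec_smul,
        Matrix.mulVec_smul, hVcol' (l:ℕ) hld, hVcol' ((l:ℕ)-1) (by omega)]
      have := hv3 (l:ℕ) hl hld
      rw [sub_eq_iff_eq_add] at this
      rw [this]
      abel
  -- W A = B W
  have hWA : W * matA d θ = B * W := by
    calc W * matA d θ = W * matA d θ * (V * W) := by rw [hVW, mul_one]
      _ = W * (matA d θ * V) * W := by rw [← mul_assoc, mul_assoc W]
      _ = W * (V * B) * W := by rw [hAV]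
      _ = (W * V) * (B * W) := by rw [← mul_assoc W V B, mul_assoc (W * V)]
      _ = B * W := by rw [hWV, one_mul]
  have hWAs : W * matAs d θs φ = Bs * W := by
    calc W * matAs d θs φ = W * matAs d θs φ * (V * W) := by rw [hVW, mul_one]
      _ = W * (matAs d θs φ * V) * W := by rw [← mul_assoc, mul_assoc W]
      _ = W * (V * Bs) * W := by rw [hAsV]
      _ = (W * V) * (Bs * W) := by rw [← mul_assoc W V Bs, mul_assoc (W * V)]
      _ = Bs * W := by rw [hWV, one_mul]
  -- distinctness
  have hdθs' : ∀ l, l < d → θs l ≠ θs d := by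
    intro l hl heq
    have := hθs l (by omega) d le_rfl heq
    omega
  -- gd = row d of W
  have hgd_eig : (ee K d d ᵥ* W) ᵥ* matAs d θs φ = θs d • (ee K d d ᵥ* W) := by
    rw [Matrix.vecMul_vecMul, hWAs, ← Matrix.vecMul_vecMul, hBs, rowAs_last d θs ϕ,
      Matrix.smul_vecMul]
  have hgd_struct : ee K d d ᵥ* W = ((ee K d d ᵥ* W) ⬝ᵥ ee K d d) • ee K d d :=
    eig_As_left d θs φ hdθs' _ hgd_eig
  set δ : K := (ee K d d ᵥ* W) ⬝ᵥ ee K d d with hδ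
  have hδne : δ ≠ 0 := by
    intro h0
    have hrow0 : ee K d d ᵥ* W = 0 := by rw [hgd_struct, h0, zero_smul]
    have h1 : (W * V) zd zd = 1 := by rw [hWV, Matrix.one_apply_eq]
    have h2 : (W * V) zd zd = (ee K d d ᵥ* W) ⬝ᵥ (fun j => V j zd) := by
      have hrow : ee K d d ᵥ* W = W zd := vecMul_ee_fin W zd
      rw [hrow, Matrix.mul_apply]
      rfl
    rw [hrow0, zero_dotProduct] at h2
    rw [h2] at h1
    exact zero_ne_one h1
  -- chain G : row d of W transported by tau powers of A
  have chainG : ∀ m, m ≤ d →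
      (ee K d d ᵥ* W) ᵥ* Polynomial.aeval (matA d θ) (tauPoly θ m) = ee K d (d - m) ᵥ* W := by
    intro m
    induction m with
    | zero =>
      intro _
      rw [tauPoly, Finset.prod_range_zero, _root_.map_one, Matrix.vecMul_one, Nat.sub_zero]
    | succ m ih =>
      intro hm
      rw [tauPoly, Finset.prod_range_succ, _root_.map_mul, ← Matrix.vecMul_vecMul, ← tauPoly,
        ih (by omega), aeval_X_sub_C, Matrix.vecMul_sub, Matrix.vecMul_vecMul, hWA,
        ← Matrix.vecMul_vecMul, hB, rowA d (fun k => θ (d - k)) (d - m) (by omega) (by omega),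
        vecMul_smul_mat, Matrix.vecMul_one]
      rw [Matrix.add_vecMul, Matrix.smul_vecMul, show d - (d - m) = m by omega]
      rw [show d - m - 1 = d - (m + 1) by omega]
      abel
  -- chain H : row 0 of W transported by (X - θs) products back to row d, with ϕ factors
  have chainH : ∀ m, m ≤ d →
      (ee K d (d - m) ᵥ* W) ᵥ* Polynomial.aeval (matAs d θs φ)
        (∏ t ∈ Finset.Ico (d - m) d, (Polynomial.X - Polynomial.C (θs t)))
      = (∏ t ∈ Finset.Icc (d - m + 1) d, ϕ t) • (ee K d d ᵥ* W) := by
    intro m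
    induction m with
    | zero =>
      intro _
      rw [Nat.sub_zero, show Finset.Ico d d = (∅ : Finset ℕ) from Finset.Ico_eq_empty (by omega),
        Finset.prod_empty, _root_.map_one, Matrix.vecMul_one,
        show Finset.Icc (d + 1) d = (∅ : Finset ℕ) from Finset.Icc_eq_empty (by omega),
        Finset.prod_empty, one_smul]
    | succ m ih =>
      intro hm
      rw [show d - (m + 1) = d - m - 1 by omega]
      rw [Finset.prod_eq_prod_Ico_succ_bot (show d - m - 1 < d by omega), _root_.map_mul,
        ← Matrix.vecMul_vecMul, aeval_X_sub_C, Matrix.vecMul_sub, Matrix.vecMul_vecMul,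
        hWAs, ← Matrix.vecMul_vecMul, hBs, rowAs d θs ϕ (d - m - 1) (by omega),
        vecMul_smul_mat, Matrix.vecMul_one]
      rw [Matrix.add_vecMul, Matrix.smul_vecMul, Matrix.smul_vecMul]
      rw [show d - m - 1 + 1 = d - m by omega]
      have hsimp : θs (d - m - 1) • (ee K d (d - m - 1) ᵥ* W)
          + ϕ (d - m) • (ee K d (d - m) ᵥ* W)
          - θs (d - m - 1) • (ee K d (d - m - 1) ᵥ* W)
          = ϕ (d - m) • (ee K d (d - m) ᵥ* W) := by abel
      rw [hsimp, Matrix.smul_vecMul, ih (by omega), smul_smul]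
      rw [prod_Icc_step ϕ (d - m) d (by omega)]
  -- g0 facts
  have hg0_eig : (ee K d 0 ᵥ* W) ᵥ* matA d θ = θ d • (ee K d 0 ᵥ* W) := by
    rw [Matrix.vecMul_vecMul, hWA, ← Matrix.vecMul_vecMul, hB, rowA0 d (fun k => θ (d - k)),
      Matrix.smul_vecMul]
    rw [show d - 0 = d by omega]
  have hG := chainG d le_rfl
  rw [show d - d = 0 by omega] at hG
  have hH := chainH d le_rfl
  rw [show d - d = 0 by omega, Nat.zero_add] at hH
  have htaus : (∏ t ∈ Finset.Ico 0 d, (Polynomial.X - Polynomial.C (θs t)))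
      = tauPoly θs d := by
    rw [tauPoly, Finset.range_eq_Ico]
  rw [htaus] at hH
  -- Esd row fact
  have hEsd_row : ee K d d ᵥ* primIdem d θs (matAs d θs φ) d = ee K d d := by
    rw [primIdem_eq, vecMul_aeval_eig (matAs d θs φ) (ee K d d) (θs d) (rowAs_last d θs φ),
      lag_eval_self d θs d le_rfl hθs, one_smul]
  have hg0Ed : (ee K d 0 ᵥ* W) ᵥ* primIdem d θ (matA d θ) d = ee K d 0 ᵥ* W := by
    rw [primIdem_eq, vecMul_aeval_eig (matA d θ) (ee K d 0 ᵥ* W) (θ d) hg0_eig,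
      lag_eval_self d θ d le_rfl hθ, one_smul]
  -- two evaluations
  have way1 : ((ee K d 0 ᵥ* W) ᵥ* Polynomial.aeval (matAs d θs φ) (tauPoly θs d))
      ᵥ* primIdem d θs (matAs d θs φ) d ⬝ᵥ ee K d d
      = (∏ t ∈ Finset.Icc 1 d, ϕ t) * δ := by
    rw [hH, Matrix.smul_vecMul]
    nth_rewrite 1 [hgd_struct]
    rw [Matrix.smul_vecMul, hEsd_row, smul_dotProduct, smul_dotProduct,
      dot_ee d le_rfl (ee K d d), ee_apply]
    simp only [smul_eq_mul, ← hδ]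
    split_ifs <;> first | ring | simp_all
  have way2 : ((ee K d 0 ᵥ* W) ᵥ* Polynomial.aeval (matAs d θs φ) (tauPoly θs d))
      ᵥ* primIdem d θs (matAs d θs φ) d ⬝ᵥ ee K d d
      = (tauPoly θs d).eval (θs d) * ((primIdem d θ (matA d θ) d *
          primIdem d θs (matAs d θs φ) d) zd zd) * ((tauPoly θ d).eval (θ d) * δ) := by
    rw [Matrix.vecMul_vecMul,
      aeval_mul_primIdem d θs (matAs d θs φ) (charZeroAs d θs φ) d le_rfl, vecMul_smul_mat]
    nth_rewrite 1 [← hg0Ed]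
    rw [Matrix.vecMul_vecMul, struct_high d θ θs φ (fun l hl heq => by
        have := hθ l (by omega) d le_rfl heq; omega) hdθs']
    rw [vecMul_smul_mat, _root_.vecMul_vecMulVec]
    have hg0d : (ee K d 0 ᵥ* W) ⬝ᵥ ee K d d = (tauPoly θ d).eval (θ d) * δ := by
      rw [← hG, ← Matrix.dotProduct_mulVec]
      have : Polynomial.aeval (matA d θ) (tauPoly θ d) *ᵥ ee K d d
          = (tauPoly θ d).eval (θ d) • ee K d d :=
        mulVec_aeval_eig (matA d θ) (ee K d d) (θ d) (colA_last d θ) (tauPoly θ d)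
      rw [this, dotProduct_smul, smul_eq_mul, hδ]
    rw [hg0d]
    rw [smul_dotProduct, smul_dotProduct, smul_dotProduct,
      dot_ee d le_rfl (ee K d d), ee_apply, Matrix.smul_apply, Matrix.vecMulVec_apply,
      ee_apply]
    simp only [smul_eq_mul]
    split_ifs <;> first | (exfalso; rename_i h; exact h (by simp [hzd])) | ring | simp_all
  have heq := way1.symm.trans way2
  have hfin : ((tauPoly θ d).eval (θ d) * (tauPoly θs d).eval (θs d) *
      ((primIdem d θ (matA d θ) d * primIdem d θs (matAs d θs φ) d) zd zd)
      - ∏ t ∈ Finset.Icc 1 d, ϕ t) * δ = 0 := by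
    rw [sub_mul, heq]
    ring
  rcases mul_eq_zero.mp hfin with h | h
  · have := sub_eq_zero.mp h
    rw [this]
  · exact absurd h hδne

end ScalarHigh

section Assemble
variable {K : Type*} [Field K]

lemma vecMulVec_smul_right {n : Type*} [Fintype n] (x y : n → K) (a : K) :
    Matrix.vecMulVec x (a • y) = a • Matrix.vecMulVec x y := by
  ext k l
  simp only [Matrix.vecMulVec_apply, Pi.smul_apply, Matrix.smul_apply, smul_eq_mul]
  ring

lemma vecMulVec_smul_left {n : Type*} [Fintype n] (x y : n → K) (a : K) :
    Matrix.vecMulVec (a • x) y = a • Matrix.vecMulVec x y := by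
  ext k l
  simp only [Matrix.vecMulVec_apply, Pi.smul_apply, Matrix.smul_apply, smul_eq_mul]
  ring

end Assemble

theorem matrix_units_two_expressions {K : Type*} [Field K] (d : ℕ) (θ θs φ ϕ : ℕ → K)
    (hθ : ∀ i ≤ d, ∀ j ≤ d, θ i = θ j → i = j)
    (hθs : ∀ i ≤ d, ∀ j ≤ d, θs i = θs j → i = j)
    (hφ : ∀ i, 1 ≤ i → i ≤ d → φ i ≠ 0)
    (hE0 : ∀ i ≤ d, ∀ j ≤ d, 1 < |(i : ℤ) - (j : ℤ)| →
      primIdem d θ (matA d θ) i * matAs d θs φ * primIdem d θ (matA d θ) j = 0)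
    (hE1 : ∀ i ≤ d, ∀ j ≤ d, |(i : ℤ) - (j : ℤ)| = 1 →
      primIdem d θ (matA d θ) i * matAs d θs φ * primIdem d θ (matA d θ) j ≠ 0)
    (hEs0 : ∀ i ≤ d, ∀ j ≤ d, 1 < |(i : ℤ) - (j : ℤ)| →
      primIdem d θs (matAs d θs φ) i * matA d θ * primIdem d θs (matAs d θs φ) j = 0)
    (hEs1 : ∀ i ≤ d, ∀ j ≤ d, |(i : ℤ) - (j : ℤ)| = 1 →
      primIdem d θs (matAs d θs φ) i * matA d θ * primIdem d θs (matAs d θs φ) j ≠ 0)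
    (hϕ : ∀ i, 1 ≤ i → i ≤ d → ϕ i ≠ 0)
    (v : ℕ → Fin (d + 1) → K)
    (hvli : LinearIndependent K fun i : Fin (d + 1) => v (i : ℕ))
    (hvsp : Submodule.span K (Set.range fun i : Fin (d + 1) => v (i : ℕ)) = ⊤)
    (hv1 : ∀ i < d, (matA d θ).mulVec (v i) - θ (d - i) • v i = v (i + 1))
    (hv2 : (matA d θ).mulVec (v d) - θ 0 • v d = 0)
    (hv3 : ∀ i, 1 ≤ i → i ≤ d →
      (matAs d θs φ).mulVec (v i) - θs i • v i = ϕ i • v (i - 1))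
    (hv4 : (matAs d θs φ).mulVec (v 0) - θs 0 • v 0 = 0) :
    ∀ i j : Fin (d + 1),
      (((etaPoly d θ d).eval (θ 0) * (etaPoly d θs d).eval (θs 0) / (∏ k ∈ Finset.Icc (1) (d), ϕ k)) / ∏ k ∈ Finset.Icc 1 (j : ℕ), φ k) •
        (Polynomial.aeval (matA d θ) (tauPoly θ ((i : ℕ))) * primIdem d θs (matAs d θs φ) 0 * primIdem d θ (matA d θ) 0 * Polynomial.aeval (matAs d θs φ) (tauPoly θs ((j : ℕ))))
      = (((tauPoly θ d).eval (θ d) * (tauPoly θs d).eval (θs d) / (∏ k ∈ Finset.Icc (1) (d), ϕ k)) / ∏ k ∈ Finset.Icc ((i : ℕ) + 1) d, φ k) •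
        (Polynomial.aeval (matAs d θs φ) (etaPoly d θs (d - (i : ℕ))) * primIdem d θ (matA d θ) d * primIdem d θs (matAs d θs φ) d * Polynomial.aeval (matA d θ) (etaPoly d θ (d - (j : ℕ)))) := by
  intro i j
  have hid : (i : ℕ) ≤ d := Nat.lt_succ_iff.mp i.isLt
  have hjd : (j : ℕ) ≤ d := Nat.lt_succ_iff.mp j.isLt
  have hdθs_low : ∀ l, 1 ≤ l → l ≤ d → θs l ≠ θs 0 := by
    intro l h1 h2 heq
    have := hθs l h2 0 (Nat.zero_le d) heq
    omega
  have hdθ_hi : ∀ l, l < d → θ l ≠ θ d := by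
    intro l hl heq
    have := hθ l (by omega) d le_rfl heq
    omega
  have hdθs_hi : ∀ l, l < d → θs l ≠ θs d := by
    intro l hl heq
    have := hθs l (by omega) d le_rfl heq
    omega
  set c : K := (primIdem d θs (matAs d θs φ) 0 * primIdem d θ (matA d θ) 0)
    ⟨0, Nat.succ_pos d⟩ ⟨0, Nat.succ_pos d⟩ with hc
  set c' : K := (primIdem d θ (matA d θ) d * primIdem d θs (matAs d θs φ) d)
    ⟨d, Nat.lt_succ_of_le le_rfl⟩ ⟨d, Nat.lt_succ_of_le le_rfl⟩ with hc'
  have hL : Polynomial.aeval (matA d θ) (tauPoly θ (i : ℕ)) * primIdem d θs (matAs d θs φ) 0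
      * primIdem d θ (matA d θ) 0 * Polynomial.aeval (matAs d θs φ) (tauPoly θs (j : ℕ))
      = (c * ∏ k ∈ Finset.Icc 1 (j : ℕ), φ k) •
        Matrix.vecMulVec (ee K d (i : ℕ)) (ee K d (j : ℕ)) := by
    rw [mul_assoc (Polynomial.aeval (matA d θ) (tauPoly θ (i : ℕ)))]
    rw [struct_low d θ θs φ hdθs_low, ← hc]
    rw [mul_smul_comm, _root_.mul_vecMulVec, tauA_mulVec d θ (i : ℕ) hid, smul_mul_assoc,
      _root_.vecMulVec_mul, tausAs_vecMul d θs φ (j : ℕ) hjd, vecMulVec_smul_right, smul_smul]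
  have hR : Polynomial.aeval (matAs d θs φ) (etaPoly d θs (d - (i : ℕ)))
      * primIdem d θ (matA d θ) d * primIdem d θs (matAs d θs φ) d
      * Polynomial.aeval (matA d θ) (etaPoly d θ (d - (j : ℕ)))
      = (c' * ∏ k ∈ Finset.Icc ((i : ℕ) + 1) d, φ k) •
        Matrix.vecMulVec (ee K d (i : ℕ)) (ee K d (j : ℕ)) := by
    rw [mul_assoc (Polynomial.aeval (matAs d θs φ) (etaPoly d θs (d - (i : ℕ))))]
    rw [struct_high d θ θs φ hdθ_hi hdθs_hi, ← hc']
    rw [mul_smul_comm, _root_.mul_vecMulVec, etasAs_mulVec d θs φ (d - (i : ℕ)) (by omega),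
      smul_mul_assoc, _root_.vecMulVec_mul, etaA_vecMul d θ (d - (j : ℕ)) (by omega)]
    rw [show d - (d - (i : ℕ)) = (i : ℕ) by omega,
      show d - (d - (j : ℕ)) = (j : ℕ) by omega]
    rw [vecMulVec_smul_left, smul_smul]
  rw [hL, hR, smul_smul, smul_smul]
  congr 1
  -- scalar identity
  have hPϕ : (∏ k ∈ Finset.Icc 1 d, ϕ k) ≠ 0 :=
    Finset.prod_ne_zero_iff.mpr (fun k hk =>
      hϕ k (Finset.mem_Icc.mp hk).1 (Finset.mem_Icc.mp hk).2)
  have hPj : (∏ k ∈ Finset.Icc 1 (j : ℕ), φ k) ≠ 0 :=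
    Finset.prod_ne_zero_iff.mpr (fun k hk =>
      hφ k (Finset.mem_Icc.mp hk).1 (le_trans (Finset.mem_Icc.mp hk).2 hjd))
  have hPi : (∏ k ∈ Finset.Icc ((i : ℕ) + 1) d, φ k) ≠ 0 :=
    Finset.prod_ne_zero_iff.mpr (fun k hk =>
      hφ k (by have := (Finset.mem_Icc.mp hk).1; omega) (Finset.mem_Icc.mp hk).2)
  have hlow := scalar_low d θ θs φ ϕ hθ hθs v hvli hv1 hv2 hv3 hv4
  have hhigh := scalar_high d θ θs φ ϕ hθ hθs v hvli hvsp hv1 hv2 hv3 hv4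
  rw [← hc] at hlow
  rw [← hc'] at hhigh
  have e1 : ((etaPoly d θ d).eval (θ 0) * (etaPoly d θs d).eval (θs 0) /
        (∏ k ∈ Finset.Icc 1 d, ϕ k)) / (∏ k ∈ Finset.Icc 1 (j : ℕ), φ k) *
        (c * ∏ k ∈ Finset.Icc 1 (j : ℕ), φ k)
      = ((etaPoly d θ d).eval (θ 0) * (etaPoly d θs d).eval (θs 0) * c) /
        (∏ k ∈ Finset.Icc 1 d, ϕ k) *
        ((∏ k ∈ Finset.Icc 1 (j : ℕ), φ k) / (∏ k ∈ Finset.Icc 1 (j : ℕ), φ k)) := by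
    ring
  have e2 : ((tauPoly θ d).eval (θ d) * (tauPoly θs d).eval (θs d) /
        (∏ k ∈ Finset.Icc 1 d, ϕ k)) / (∏ k ∈ Finset.Icc ((i : ℕ) + 1) d, φ k) *
        (c' * ∏ k ∈ Finset.Icc ((i : ℕ) + 1) d, φ k)
      = ((tauPoly θ d).eval (θ d) * (tauPoly θs d).eval (θs d) * c') /
        (∏ k ∈ Finset.Icc 1 d, ϕ k) *
        ((∏ k ∈ Finset.Icc ((i : ℕ) + 1) d, φ k) / (∏ k ∈ Finset.Icc ((i : ℕ) + 1) d, φ k)) := by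
    ring
  rw [e1, e2, div_self hPj, div_self hPi, hlow, hhigh]
end
end

section
/- For 1≤i≤d the first split sequence satisfies φ_i = Σ_{k=i}^{d} tr((A A* − A* A) F_k) and φ_i = Σ_{k=0}^{i−1} tr((A* A − A A*) F_k); moreover the second split sequence satisfies ϕ_i = Σ_{k=i}^{d} tr((A A* − A* A) F^⇓_k) and ϕ_i = Σ_{k=0}^{i−1} tr((A* A − A A*) F^⇓_k). -/
open Polynomial Matrix Finset

noncomputable section

/-- `F_k`: the matrix whose `(k,k)`-entry is `1` and whose other entries are `0`. -/
def matF {K : Type*} [Field K] (d : ℕ) (k : ℕ) : Matrix (Fin (d + 1)) (Fin (d + 1)) K :=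
  Matrix.of fun a b => if (a : ℕ) = k ∧ (b : ℕ) = k then 1 else 0

lemma sum_two {n : ℕ} {M : Type*} [AddCommMonoid M] (f : Fin n → M) (a b : Fin n) (hab : a ≠ b)
    (h : ∀ c, c ≠ a → c ≠ b → f c = 0) : ∑ c, f c = f a + f b := by
  rw [← Finset.sum_subset (Finset.subset_univ ({a, b} : Finset (Fin n)))]
  · exact Finset.sum_pair hab
  · intro x _ hx
    simp only [Finset.mem_insert, Finset.mem_singleton, not_or] at hx
    exact h x hx.1 hx.2

lemma AAs_diag {K : Type*} [Field K] (d : ℕ) (α β γ : ℕ → K) (k : Fin (d + 1)) :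
    (matA d α * matAs d β γ) k k = α k * β k + (if 1 ≤ (k : ℕ) then γ (k : ℕ) else 0) := by
  rw [Matrix.mul_apply]
  by_cases hk : (k : ℕ) = 0
  · rw [Fintype.sum_eq_single k]
    · simp [matA, matAs, hk]
    · intro c hc
      have hc' : (k : ℕ) ≠ (c : ℕ) := fun h => hc (Fin.ext h.symm)
      simp only [matA, matAs, Matrix.of_apply]
      rw [if_neg hc', if_neg (by omega)]
      simp
  · have h1 : 1 ≤ (k : ℕ) := by omega
    have hklt : (k : ℕ) < d + 1 := k.isLt
    set k' : Fin (d + 1) := ⟨(k : ℕ) - 1, by omega⟩ with hk'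
    have hne : k ≠ k' := by
      intro h
      have := congrArg Fin.val h
      simp [hk'] at this; omega
    rw [sum_two _ k k' hne]
    · have hvk' : (k' : ℕ) = (k : ℕ) - 1 := rfl
      simp only [matA, matAs, Matrix.of_apply]
      rw [if_pos h1]
      split_ifs <;> first | (exfalso; omega) | ring
    · intro c hc1 hc2
      have hc1' : (k : ℕ) ≠ (c : ℕ) := fun h => hc1 (Fin.ext h.symm)
      have hc2' : (c : ℕ) ≠ (k : ℕ) - 1 := fun h => hc2 (Fin.ext h)
      simp only [matA, matAs, Matrix.of_apply]
      rw [if_neg hc1', if_neg (by omega)]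
      simp

lemma AsA_diag {K : Type*} [Field K] (d : ℕ) (α β γ : ℕ → K) (k : Fin (d + 1)) :
    (matAs d β γ * matA d α) k k = β k * α k + (if (k : ℕ) < d then γ ((k : ℕ) + 1) else 0) := by
  rw [Matrix.mul_apply]
  by_cases hk : (k : ℕ) = d
  · rw [Fintype.sum_eq_single k]
    · simp [matA, matAs, hk]
    · intro c hc
      have hc' : (k : ℕ) ≠ (c : ℕ) := fun h => hc (Fin.ext h.symm)
      have hcd : (c : ℕ) < d + 1 := c.isLt
      simp only [matA, matAs, Matrix.of_apply]
      rw [if_neg hc', if_neg (by omega)]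
      simp
  · have hlt : (k : ℕ) < d := by have := k.isLt; omega
    set k' : Fin (d + 1) := ⟨(k : ℕ) + 1, by omega⟩ with hk'
    have hne : k ≠ k' := by
      intro h
      have := congrArg Fin.val h
      simp [hk'] at this
    rw [sum_two _ k k' hne]
    · have hvk' : (k' : ℕ) = (k : ℕ) + 1 := rfl
      simp only [matA, matAs, Matrix.of_apply]
      rw [if_pos hlt]
      split_ifs <;> first | (exfalso; omega) | ring
    · intro c hc1 hc2
      have hc1' : (k : ℕ) ≠ (c : ℕ) := fun h => hc1 (Fin.ext h.symm)
      have hc2' : (c : ℕ) ≠ (k : ℕ) + 1 := fun h => hc2 (Fin.ext h)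
      simp only [matA, matAs, Matrix.of_apply]
      rw [if_neg hc1', if_neg (by omega)]
      simp

lemma comm_diag {K : Type*} [Field K] (d : ℕ) (α β γ : ℕ → K) (k : Fin (d + 1)) :
    (matA d α * matAs d β γ - matAs d β γ * matA d α) k k =
      (if 1 ≤ (k : ℕ) ∧ (k : ℕ) ≤ d then γ (k : ℕ) else 0) -
      (if 1 ≤ (k : ℕ) + 1 ∧ (k : ℕ) + 1 ≤ d then γ ((k : ℕ) + 1) else 0) := by
  rw [Matrix.sub_apply, AAs_diag, AsA_diag]
  have hkd : (k : ℕ) ≤ d := by have := k.isLt; omega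
  have h1 : (if 1 ≤ (k : ℕ) then γ (k : ℕ) else 0)
      = (if 1 ≤ (k : ℕ) ∧ (k : ℕ) ≤ d then γ (k : ℕ) else 0) := by
    split_ifs <;> first | rfl | omega
  have h2 : (if (k : ℕ) < d then γ ((k : ℕ) + 1) else 0)
      = (if 1 ≤ (k : ℕ) + 1 ∧ (k : ℕ) + 1 ≤ d then γ ((k : ℕ) + 1) else 0) := by
    split_ifs <;> first | rfl | omega
  rw [h1, h2]; ring

lemma trace_mul_matF {K : Type*} [Field K] (d : ℕ) (M : Matrix (Fin (d + 1)) (Fin (d + 1)) K)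
    {k : ℕ} (hk : k ≤ d) :
    Matrix.trace (M * matF d k) = M ⟨k, by omega⟩ ⟨k, by omega⟩ := by
  set kk : Fin (d + 1) := ⟨k, by omega⟩ with hkk
  rw [Matrix.trace]
  rw [Fintype.sum_eq_single kk]
  · rw [Matrix.diag_apply, Matrix.mul_apply, Fintype.sum_eq_single kk]
    · simp [matF, hkk]
    · intro c hc
      have hc' : (c : ℕ) ≠ k := fun h => hc (Fin.ext h)
      simp [matF, hc']
  · intro a ha
    have ha' : (a : ℕ) ≠ k := fun h => ha (Fin.ext h)
    rw [Matrix.diag_apply, Matrix.mul_apply]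
    apply Finset.sum_eq_zero
    intro b _
    simp [matF, ha']

lemma tel_Icc {K : Type*} [Field K] (g : ℕ → K) :
    ∀ n, ∀ i ≤ n, ∑ k ∈ Finset.Icc i n, (g k - g (k + 1)) = g i - g (n + 1) := by
  intro n
  induction n with
  | zero => intro i hi; interval_cases i; simp
  | succ n ih =>
    intro i hi
    rcases Nat.lt_or_ge i (n + 1) with h | h
    · rw [Finset.sum_Icc_succ_top (by omega), ih i (by omega)]; ring
    · have : i = n + 1 := by omega
      subst this; simp

lemma core_sum {K : Type*} [Field K] (d : ℕ) (α β γ : ℕ → K) {i : ℕ} (h1 : 1 ≤ i) (h2 : i ≤ d) :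
    (∑ k ∈ Finset.Icc i d, Matrix.trace
        ((matA d α * matAs d β γ - matAs d β γ * matA d α) * matF d k) = γ i)
    ∧ (∑ k ∈ Finset.range i, Matrix.trace
        ((matAs d β γ * matA d α - matA d α * matAs d β γ) * matF d k) = γ i) := by
  set g : ℕ → K := fun k => if 1 ≤ k ∧ k ≤ d then γ k else 0 with hg
  have key : ∀ k ≤ d, Matrix.trace
      ((matA d α * matAs d β γ - matAs d β γ * matA d α) * matF d k) = g k - g (k + 1) := by
    intro k hk
    rw [trace_mul_matF d _ hk, comm_diag]
  have key2 : ∀ k ≤ d, Matrix.trace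
      ((matAs d β γ * matA d α - matA d α * matAs d β γ) * matF d k) = g (k + 1) - g k := by
    intro k hk
    have : matAs d β γ * matA d α - matA d α * matAs d β γ
        = -(matA d α * matAs d β γ - matAs d β γ * matA d α) := (neg_sub _ _).symm
    rw [this, neg_mul, Matrix.trace_neg, key k hk]; ring
  constructor
  · rw [Finset.sum_congr rfl (fun k hk => key k (Finset.mem_Icc.mp hk).2),
      tel_Icc g d i h2]
    have : g (d + 1) = 0 := by simp [hg]
    rw [this, sub_zero, hg]
    simp [h1, h2]
  · rw [Finset.sum_congr rfl (fun k hk => key2 k (by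
      have := Finset.mem_range.mp hk; omega)),
      Finset.sum_range_sub g i]
    have : g 0 = 0 := by simp [hg]
    rw [this, sub_zero, hg]
    simp [h1, h2]


theorem split_sequence_trace_formula {K : Type*} [Field K] (d : ℕ) (θ θs φ ϕ : ℕ → K)
    (hϕ : ∀ i, 1 ≤ i → i ≤ d → ϕ i ≠ 0)
    (v : ℕ → Fin (d + 1) → K)
    (hvli : LinearIndependent K fun i : Fin (d + 1) => v (i : ℕ))
    (hvsp : Submodule.span K (Set.range fun i : Fin (d + 1) => v (i : ℕ)) = ⊤)
    (hv1 : ∀ i < d, (matA d θ).mulVec (v i) - θ (d - i) • v i = v (i + 1))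
    (hv2 : (matA d θ).mulVec (v d) - θ 0 • v d = 0)
    (hv3 : ∀ i, 1 ≤ i → i ≤ d →
      (matAs d θs φ).mulVec (v i) - θs i • v i = ϕ i • v (i - 1))
    (hv4 : (matAs d θs φ).mulVec (v 0) - θs 0 • v 0 = 0)
    (Fd : ℕ → Matrix (Fin (d + 1)) (Fin (d + 1)) K)
    (hFd : ∀ k ≤ d, ∀ j ≤ d, (Fd k).mulVec (v j) = if j = k then v j else 0) :
    ∀ i, 1 ≤ i → i ≤ d →
      φ i = ∑ k ∈ Finset.Icc i d, Matrix.trace ((matA d θ * matAs d θs φ - matAs d θs φ * matA d θ) * matF d k)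
      ∧ φ i = ∑ k ∈ Finset.range i, Matrix.trace ((matAs d θs φ * matA d θ - matA d θ * matAs d θs φ) * matF d k)
      ∧ ϕ i = ∑ k ∈ Finset.Icc i d, Matrix.trace ((matA d θ * matAs d θs φ - matAs d θs φ * matA d θ) * Fd k)
      ∧ ϕ i = ∑ k ∈ Finset.range i, Matrix.trace ((matAs d θs φ * matA d θ - matA d θ * matAs d θs φ) * Fd k) := by
  intro i hi1 hi2
  obtain ⟨c1, c2⟩ := core_sum d θ θs φ hi1 hi2
  set θ' : ℕ → K := fun j => θ (d - j) with hθ'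
  set P : Matrix (Fin (d + 1)) (Fin (d + 1)) K := Matrix.of fun a j => v (j : ℕ) a with hPdef
  have hPunit : IsUnit P := by
    rw [← Matrix.linearIndependent_cols_iff_isUnit]
    exact hvli
  have hPdet : IsUnit P.det := (Matrix.isUnit_iff_isUnit_det P).mp hPunit
  have mulP : ∀ (M : Matrix (Fin (d + 1)) (Fin (d + 1)) K) (a j : Fin (d + 1)),
      (M * P) a j = M.mulVec (v (j : ℕ)) a := by
    intro M a j
    simp [Matrix.mul_apply, Matrix.mulVec, dotProduct, hPdef]
  have hAP : matA d θ * P = P * matA d θ' := by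
    ext a j
    rw [mulP, Matrix.mul_apply]
    by_cases hj : (j : ℕ) = d
    · rw [Fintype.sum_eq_single j (fun b hb => by
        have hb' : (b : ℕ) ≠ (j : ℕ) := fun h => hb (Fin.ext h)
        simp only [matA, Matrix.of_apply, hPdef]
        have hbd : (b : ℕ) < d + 1 := b.isLt
        split_ifs <;> first | (exfalso; omega) | simp)]
      have e1 : matA d θ' j j = θ' (j : ℕ) := by simp [matA]
      rw [e1]
      show (matA d θ).mulVec (v (j : ℕ)) a = v (j : ℕ) a * θ' (j : ℕ)
      have hmv : (matA d θ).mulVec (v d) = θ 0 • v d := sub_eq_zero.mp hv2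
      rw [hj, hmv]
      simp [hθ', mul_comm]
    · have hjd : (j : ℕ) < d := by have := j.isLt; omega
      set j' : Fin (d + 1) := ⟨(j : ℕ) + 1, by omega⟩ with hj'
      have hvj' : (j' : ℕ) = (j : ℕ) + 1 := rfl
      have hne : j ≠ j' := by
        intro h; have := congrArg Fin.val h; rw [hvj'] at this; omega
      rw [sum_two _ j j' hne (fun c hc1 hc2 => by
        have hc1' : (c : ℕ) ≠ (j : ℕ) := fun h => hc1 (Fin.ext h)
        have hc2' : (c : ℕ) ≠ (j : ℕ) + 1 := fun h => hc2 (Fin.ext (h.trans hvj'.symm))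
        simp only [matA, Matrix.of_apply, hPdef]
        split_ifs <;> first | (exfalso; omega) | simp)]
      have e1 : matA d θ' j j = θ' (j : ℕ) := by simp [matA]
      have e2 : matA d θ' j' j = 1 := by
        simp only [matA, Matrix.of_apply, hvj']
        rw [if_neg (by omega)]
        simp
      rw [e1, e2]
      show (matA d θ).mulVec (v (j : ℕ)) a
          = v (j : ℕ) a * θ' (j : ℕ) + v ((j' : ℕ)) a * 1
      have hmv : (matA d θ).mulVec (v (j : ℕ))
          = v ((j : ℕ) + 1) + θ (d - (j : ℕ)) • v (j : ℕ) := by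
        have h := hv1 (j : ℕ) hjd
        rw [sub_eq_iff_eq_add] at h
        rw [h]
      rw [hmv, hvj']
      simp only [Pi.add_apply, Pi.smul_apply, smul_eq_mul, hθ', mul_one]
      ring
  have hAsP : matAs d θs φ * P = P * matAs d θs ϕ := by
    ext a j
    rw [mulP, Matrix.mul_apply]
    by_cases hj : (j : ℕ) = 0
    · rw [Fintype.sum_eq_single j (fun b hb => by
        have hb' : (b : ℕ) ≠ (j : ℕ) := fun h => hb (Fin.ext h)
        simp only [matAs, Matrix.of_apply, hPdef]
        split_ifs <;> first | (exfalso; omega) | simp)]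
      have e1 : matAs d θs ϕ j j = θs (j : ℕ) := by simp [matAs]
      rw [e1]
      show (matAs d θs φ).mulVec (v (j : ℕ)) a = v (j : ℕ) a * θs (j : ℕ)
      have hmv : (matAs d θs φ).mulVec (v 0) = θs 0 • v 0 := sub_eq_zero.mp hv4
      rw [hj, hmv]
      simp [mul_comm]
    · have hj1 : 1 ≤ (j : ℕ) := by omega
      have hjd : (j : ℕ) ≤ d := by have := j.isLt; omega
      set j' : Fin (d + 1) := ⟨(j : ℕ) - 1, by omega⟩ with hj'
      have hvj' : (j' : ℕ) = (j : ℕ) - 1 := rfl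
      have hne : j ≠ j' := by
        intro h; have := congrArg Fin.val h; rw [hvj'] at this; omega
      rw [sum_two _ j j' hne (fun c hc1 hc2 => by
        have hc1' : (c : ℕ) ≠ (j : ℕ) := fun h => hc1 (Fin.ext h)
        have hc2' : (c : ℕ) ≠ (j : ℕ) - 1 := fun h => hc2 (Fin.ext (h.trans hvj'.symm))
        simp only [matAs, Matrix.of_apply, hPdef]
        split_ifs <;> first | (exfalso; omega) | simp)]
      have e1 : matAs d θs ϕ j j = θs (j : ℕ) := by simp [matAs]
      have e2 : matAs d θs ϕ j' j = ϕ (j : ℕ) := by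
        simp only [matAs, Matrix.of_apply, hvj']
        rw [if_neg (by omega)]
        rw [if_pos (by omega)]
      rw [e1, e2]
      show (matAs d θs φ).mulVec (v (j : ℕ)) a
          = v (j : ℕ) a * θs (j : ℕ) + v ((j' : ℕ)) a * ϕ (j : ℕ)
      have hmv : (matAs d θs φ).mulVec (v (j : ℕ))
          = θs (j : ℕ) • v (j : ℕ) + ϕ (j : ℕ) • v ((j : ℕ) - 1) := by
        have h := hv3 (j : ℕ) hj1 hjd
        rw [sub_eq_iff_eq_add] at h
        rw [h]; abel
      rw [hmv, hvj']
      simp only [Pi.add_apply, Pi.smul_apply, smul_eq_mul]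
      ring
  have hFP : ∀ k ≤ d, Fd k * P = P * matF d k := by
    intro k hk
    ext a j
    have hjd : (j : ℕ) ≤ d := by have := j.isLt; omega
    rw [mulP, hFd k hk (j : ℕ) hjd, Matrix.mul_apply]
    by_cases hj : (j : ℕ) = k
    · set kk : Fin (d + 1) := ⟨k, by omega⟩ with hkk
      have hvkk : (kk : ℕ) = k := rfl
      rw [Fintype.sum_eq_single kk (fun b hb => by
        have hb' : (b : ℕ) ≠ k := fun h => hb (Fin.ext (h.trans hvkk.symm))
        simp [matF, hPdef, hb'])]
      simp [matF, hPdef, hvkk, hj]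
    · rw [if_neg hj]
      apply Eq.symm
      apply Finset.sum_eq_zero
      intro b _
      simp [matF, hPdef, hj]
  have conj : ∀ k ≤ d, Matrix.trace ((matA d θ * matAs d θs φ - matAs d θs φ * matA d θ) * Fd k)
      = Matrix.trace ((matA d θ' * matAs d θs ϕ - matAs d θs ϕ * matA d θ') * matF d k) := by
    intro k hk
    set C := matA d θ * matAs d θs φ - matAs d θs φ * matA d θ with hC
    set C' := matA d θ' * matAs d θs ϕ - matAs d θs ϕ * matA d θ' with hC'
    have hCP : C * P = P * C' := by
      rw [hC, hC', sub_mul, mul_sub, mul_assoc, mul_assoc, hAsP, hAP,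
        ← mul_assoc, ← mul_assoc, hAP, hAsP, mul_assoc, mul_assoc]
    have hX : C * Fd k = P * (C' * matF d k) * P⁻¹ := by
      have h1 : (C * Fd k) * P = P * (C' * matF d k) := by
        rw [mul_assoc, hFP k hk, ← mul_assoc, hCP, mul_assoc]
      calc C * Fd k = C * Fd k * (P * P⁻¹) := by
            rw [Matrix.mul_nonsing_inv _ hPdet, mul_one]
        _ = (C * Fd k * P) * P⁻¹ := by rw [← mul_assoc]
        _ = P * (C' * matF d k) * P⁻¹ := by rw [h1]
    rw [hX, Matrix.trace_mul_comm, ← mul_assoc, Matrix.nonsing_inv_mul _ hPdet, one_mul]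
  refine ⟨c1.symm, c2.symm, ?_, ?_⟩
  · rw [Finset.sum_congr rfl (fun k hk => conj k (Finset.mem_Icc.mp hk).2)]
    exact (core_sum d θ' θs ϕ hi1 hi2).1.symm
  · have conj2 : ∀ k ≤ d,
        Matrix.trace ((matAs d θs φ * matA d θ - matA d θ * matAs d θs φ) * Fd k)
        = Matrix.trace ((matAs d θs ϕ * matA d θ' - matA d θ' * matAs d θs ϕ) * matF d k) := by
      intro k hk
      have e1 : matAs d θs φ * matA d θ - matA d θ * matAs d θs φ
          = -(matA d θ * matAs d θs φ - matAs d θs φ * matA d θ) := (neg_sub _ _).symm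
      have e2 : matAs d θs ϕ * matA d θ' - matA d θ' * matAs d θs ϕ
          = -(matA d θ' * matAs d θs ϕ - matAs d θs ϕ * matA d θ') := (neg_sub _ _).symm
      rw [e1, e2, neg_mul, neg_mul, Matrix.trace_neg, Matrix.trace_neg, conj k hk]
    rw [Finset.sum_congr rfl (fun k hk => conj2 k (by
      have := Finset.mem_range.mp hk; omega))]
    exact (core_sum d θ' θs ϕ hi1 hi2).2.symm
end
end
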